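/- arXiv:1207.4738 — 4 statements merged into one kernel-verified Lean document; each statement's English description precedes it below -/
import Mathlib

section
/- Let Ω be a finite set of players and let G ≤ S_Ω be a group of permutations of Ω. A linear game value φ, represented in the unanimity basis {u_R} and the canonical basis of ℝ^Ω by the matrix (a_{iR}) with a_{iR} = φ(u_R)({i}) for i ∈ Ω and ∅ ≠ R ⊆ Ω, is a G-symmetric quasi-value if and only if: (1) a_{iR} = 0 whenever i ∉ R, (2) for every nonempty R ⊆ Ω, the column sum ∑_{i∈Ω} a_{iR} = 1, and (3) the coefficients a_{iR} are constant on the orbits of the G-action g·(i,R) = (g·i, g·R). -/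
open scoped BigOperators

/-- The space of cooperative games on player set `Ω`: real-valued functions on
coalitions vanishing on the empty coalition. -/
def GameSpace (Ω : Type*) [DecidableEq Ω] : Submodule ℝ (Finset Ω → ℝ) where
  carrier := {v | v ∅ = 0}
  add_mem' := by
    intro a b ha hb
    simp only [Set.mem_setOf_eq, Pi.add_apply] at *
    simp [ha, hb]
  zero_mem' := rfl
  smul_mem' := by
    intro c v hv
    simp only [Set.mem_setOf_eq, Pi.smul_apply] at *
    simp [hv]

/-- A (linear) game value: a linear operator from games to payoff vectors. -/
abbrev GameValue (Ω : Type*) [DecidableEq Ω] := GameSpace Ω →ₗ[ℝ] (Ω → ℝ)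

/-- Player `i` is a null player of the game `v`: `v(R ∪ {i}) = v(R)` for all `R`. -/
def IsNullPlayer {Ω : Type*} [DecidableEq Ω] (i : Ω) (v : GameSpace Ω) : Prop :=
  ∀ R : Finset Ω, (v : Finset Ω → ℝ) (insert i R) = (v : Finset Ω → ℝ) R

/-- A quasi-value: a linear game value satisfying the null-player property and
efficiency. -/
def IsQuasiValue {Ω : Type*} [Fintype Ω] [DecidableEq Ω] (φ : GameValue Ω) : Prop :=
  (∀ (v : GameSpace Ω) (i : Ω), IsNullPlayer i v → φ v i = 0) ∧
  (∀ v : GameSpace Ω, ∑ i, φ v i = (v : Finset Ω → ℝ) Finset.univ)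

/-- The action of a permutation on a game: `(g • v)(R) = v(g⁻¹(R))`. -/
def permGame {Ω : Type*} [DecidableEq Ω] (g : Equiv.Perm Ω) (v : GameSpace Ω) :
    GameSpace Ω :=
  ⟨fun R => (v : Finset Ω → ℝ) (R.image (g⁻¹ : Equiv.Perm Ω)), by
    show (v : Finset Ω → ℝ) ((∅ : Finset Ω).image (g⁻¹ : Equiv.Perm Ω)) = 0
    rw [Finset.image_empty]
    exact v.2⟩

/-- `φ` is symmetric with respect to all permutations in `G`:
`φ(g • v) = g • φ(v)`, i.e. `φ(g • v)ᵢ = φ(v)_{g⁻¹ i}` for all `g ∈ G`. -/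
def IsGSym {Ω : Type*} [DecidableEq Ω] (G : Subgroup (Equiv.Perm Ω))
    (φ : GameValue Ω) : Prop :=
  ∀ g ∈ G, ∀ (v : GameSpace Ω) (i : Ω), φ (permGame g v) i = φ v (g⁻¹ i)

/-- The unanimity game `u_R` for a nonempty coalition `R`. -/
def unanimity {Ω : Type*} [DecidableEq Ω] (R : Finset Ω) (hR : R.Nonempty) :
    GameSpace Ω :=
  ⟨fun S => if R ⊆ S then (1 : ℝ) else 0, by
    show (if R ⊆ (∅ : Finset Ω) then (1 : ℝ) else 0) = 0
    simp [Finset.subset_empty, hR.ne_empty]⟩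

namespace Stmt0Aux

open Finset

variable {Ω : Type*} [DecidableEq Ω]

/-- Harsanyi dividend of a coalition function. -/
noncomputable def divd (v : Finset Ω → ℝ) (R : Finset Ω) : ℝ :=
  ∑ T ∈ R.powerset, (-1 : ℝ) ^ (R.card - T.card) * v T

lemma divd_empty (v : Finset Ω → ℝ) (hv : v ∅ = 0) : divd v ∅ = 0 := by
  simp [divd, hv]

lemma inner_sum (S T : Finset Ω) (hT : T ⊆ S) :
    ∑ R ∈ S.powerset.filter (fun R => T ⊆ R), (-1 : ℝ) ^ (R.card - T.card)
      = if T = S then 1 else 0 := by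
  have key : ∑ R ∈ S.powerset.filter (fun R => T ⊆ R), (-1 : ℝ) ^ (R.card - T.card)
      = ∑ U ∈ (S \ T).powerset, (-1 : ℝ) ^ U.card := by
    refine Finset.sum_nbij' (fun R => R \ T) (fun U => U ∪ T) ?_ ?_ ?_ ?_ ?_
    · intro R hR
      simp only [mem_filter, mem_powerset] at hR
      exact mem_powerset.2 (sdiff_subset_sdiff hR.1 le_rfl)
    · intro U hU
      simp only [mem_powerset] at hU
      refine mem_filter.2 ⟨mem_powerset.2 (union_subset (hU.trans sdiff_subset) hT),
        subset_union_right⟩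
    · intro R hR
      simp only [mem_filter, mem_powerset] at hR
      exact sdiff_union_of_subset hR.2
    · intro U hU
      simp only [mem_powerset] at hU
      have hd : Disjoint U T := disjoint_left.2 fun x hx => (mem_sdiff.1 (hU hx)).2
      show (U ∪ T) \ T = U
      simp [union_sdiff_distrib, sdiff_eq_self_of_disjoint hd]
    · intro R hR
      simp only [mem_filter, mem_powerset] at hR
      rw [card_sdiff_of_subset hR.2]
  rw [key]
  have hz : ((∑ U ∈ (S \ T).powerset, (-1 : ℤ) ^ U.card : ℤ) : ℝ)
      = ((if S \ T = ∅ then 1 else 0 : ℤ) : ℝ) := by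
    rw [Finset.sum_powerset_neg_one_pow_card]
  push_cast at hz
  rw [hz]
  by_cases h : T = S
  · subst h; simp
  · rw [if_neg h, if_neg]
    intro hc
    rw [sdiff_eq_empty_iff_subset] at hc
    exact h (subset_antisymm hT hc)

lemma inversion (v : Finset Ω → ℝ) (S : Finset Ω) :
    ∑ R ∈ S.powerset, divd v R = v S := by
  unfold divd
  rw [Finset.sum_comm' (t' := S.powerset) (s' := fun T => S.powerset.filter (fun R => T ⊆ R))
    (by
      intro R T
      simp only [mem_powerset, mem_filter]
      constructor
      · rintro ⟨h1, h2⟩; exact ⟨⟨h1, h2⟩, h2.trans h1⟩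
      · rintro ⟨⟨h1, h2⟩, _⟩; exact ⟨h1, h2⟩)]
  have : ∀ T ∈ S.powerset,
      (∑ R ∈ S.powerset.filter (fun R => T ⊆ R), (-1 : ℝ) ^ (R.card - T.card) * v T)
        = if T = S then v T else 0 := by
    intro T hT
    rw [← Finset.sum_mul, inner_sum S T (mem_powerset.1 hT)]
    split_ifs <;> simp
  rw [Finset.sum_congr rfl this, Finset.sum_ite_eq' S.powerset S v]
  simp

lemma divd_null (v : Finset Ω → ℝ) (i : Ω) (hnull : ∀ R, v (insert i R) = v R)
    (R : Finset Ω) (hi : i ∈ R) : divd v R = 0 := by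
  unfold divd
  have hR : insert i (R.erase i) = R := Finset.insert_erase hi
  have hiR' : i ∉ R.erase i := Finset.notMem_erase i R
  rw [← hR, Finset.powerset_insert, Finset.sum_union, Finset.sum_image, ← Finset.sum_add_distrib]
  · apply Finset.sum_eq_zero
    intro T hT
    have hTsub := Finset.mem_powerset.1 hT
    have hiT : i ∉ T := fun h => hiR' (hTsub h)
    have hcard : T.card ≤ (R.erase i).card := Finset.card_le_card hTsub
    rw [Finset.card_insert_of_notMem hiR', Finset.card_insert_of_notMem hiT,
      hnull T, Nat.succ_sub hcard, Nat.succ_sub_succ, Nat.succ_eq_add_one, pow_succ]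
    ring
  · intro T hT T' hT' h
    have hiT : i ∉ T := fun hh => hiR' (Finset.mem_powerset.1 hT hh)
    have hiT' : i ∉ T' := fun hh => hiR' (Finset.mem_powerset.1 hT' hh)
    rw [← Finset.erase_insert hiT, h, Finset.erase_insert hiT']
  · rw [Finset.disjoint_left]
    intro T hT hT2
    obtain ⟨T', _, rfl⟩ := Finset.mem_image.1 hT2
    exact hiR' (Finset.mem_powerset.1 hT (Finset.mem_insert_self i T'))

lemma image_image_inv (g : Equiv.Perm Ω) (S : Finset Ω) :
    (S.image ⇑g⁻¹).image ⇑g = S := by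
  rw [Finset.image_image]
  ext x
  simp

lemma image_inv_image (g : Equiv.Perm Ω) (S : Finset Ω) :
    (S.image ⇑g).image ⇑g⁻¹ = S := by
  rw [Finset.image_image]
  ext x
  simp

lemma divd_perm (g : Equiv.Perm Ω) (v : Finset Ω → ℝ) (R : Finset Ω) :
    divd (fun S => v (S.image ⇑g⁻¹)) R = divd v (R.image ⇑g⁻¹) := by
  unfold divd
  refine Finset.sum_nbij' (fun T => T.image ⇑g⁻¹) (fun T => T.image ⇑g) ?_ ?_ ?_ ?_ ?_
  · intro T hT
    exact Finset.mem_powerset.2 (Finset.image_subset_image (Finset.mem_powerset.1 hT))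
  · intro T hT
    rw [Finset.mem_powerset, ← image_image_inv g R]
    exact Finset.image_subset_image (Finset.mem_powerset.1 hT)
  · intro T _; exact image_image_inv g T
  · intro T _; exact image_inv_image g T
  · intro T _
    rw [Finset.card_image_of_injective _ (Equiv.injective _),
      Finset.card_image_of_injective _ (Equiv.injective _)]

end Stmt0Aux
namespace Stmt0Aux

variable {Ω : Type*} [Fintype Ω] [DecidableEq Ω]

/-- Unanimity game extended by `0` to the empty coalition. -/
noncomputable def una' (R : Finset Ω) : GameSpace Ω :=
  if h : R.Nonempty then unanimity R h else 0

lemma una'_coe (R S : Finset Ω) :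
    (una' R : Finset Ω → ℝ) S = if R.Nonempty ∧ R ⊆ S then 1 else 0 := by
  by_cases h : R.Nonempty
  · rw [una', dif_pos h]
    show (if R ⊆ S then (1:ℝ) else 0) = _
    simp [h]
  · rw [una', dif_neg h]
    simp [h]

lemma decomp (v : GameSpace Ω) :
    v = ∑ R ∈ Finset.univ.powerset, divd (v : Finset Ω → ℝ) R • una' R := by
  apply Subtype.ext
  have hc : ((∑ R ∈ Finset.univ.powerset, divd (v : Finset Ω → ℝ) R • una' R : GameSpace Ω)
      : Finset Ω → ℝ)
      = ∑ R ∈ Finset.univ.powerset, divd (v : Finset Ω → ℝ) R • (una' R : Finset Ω → ℝ) := by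
    push_cast
    rfl
  rw [hc]
  funext S
  rw [Finset.sum_apply]
  have h0 : divd (v : Finset Ω → ℝ) ∅ = 0 := divd_empty _ v.2
  have step : ∀ R ∈ Finset.univ.powerset,
      (divd (v : Finset Ω → ℝ) R • (una' R : Finset Ω → ℝ)) S
        = if R ⊆ S then divd (v : Finset Ω → ℝ) R else 0 := by
    intro R _
    rw [Pi.smul_apply, una'_coe, smul_eq_mul]
    by_cases h : R.Nonempty
    · simp [h]
    · rw [Finset.not_nonempty_iff_eq_empty] at h
      subst h
      simp [h0]
  rw [Finset.sum_congr rfl step, ← Finset.sum_filter]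
  have hfil : Finset.univ.powerset.filter (fun R => R ⊆ S) = S.powerset := by
    ext R
    simp [Finset.mem_powerset, Finset.mem_filter, Finset.subset_univ]
  rw [hfil, inversion]

lemma phi_eq (φ : GameValue Ω) (v : GameSpace Ω) (i : Ω) :
    φ v i = ∑ R ∈ Finset.univ.powerset, divd (v : Finset Ω → ℝ) R * φ (una' R) i := by
  conv_lhs => rw [decomp v]
  rw [map_sum, Finset.sum_apply]
  refine Finset.sum_congr rfl fun R _ => ?_
  rw [map_smul]
  rfl

lemma permGame_unanimity (g : Equiv.Perm Ω) (R : Finset Ω) (hR : R.Nonempty) :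
    permGame g (unanimity R hR) = unanimity (R.image ⇑g) (hR.image ⇑g) := by
  apply Subtype.ext
  funext S
  show (if R ⊆ S.image ⇑g⁻¹ then (1:ℝ) else 0) = if R.image ⇑g ⊆ S then 1 else 0
  have hiff : R ⊆ S.image ⇑g⁻¹ ↔ R.image ⇑g ⊆ S := by
    rw [← Finset.image_subset_image_iff (Equiv.injective g), image_image_inv g S]
  exact if_congr hiff rfl rfl

end Stmt0Aux
/-- a linear game value `φ` is a `G`-symmetric quasi-value iff its
matrix `a_{iR} = φ(u_R)({i})` in the unanimity basis satisfies: (1) `a_{iR} = 0`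
for `i ∉ R`; (2) every column sums to `1`; (3) the entries are constant on the
orbits of the action `g • (i, R) = (g i, g R)`. -/
theorem stmt0 {Ω : Type*} [Fintype Ω] [DecidableEq Ω] (G : Subgroup (Equiv.Perm Ω))
    (φ : GameValue Ω) :
    (IsQuasiValue φ ∧ IsGSym G φ) ↔
      ((∀ (R : Finset Ω) (hR : R.Nonempty), ∀ i ∉ R, φ (unanimity R hR) i = 0) ∧
       (∀ (R : Finset Ω) (hR : R.Nonempty), ∑ i, φ (unanimity R hR) i = 1) ∧
       (∀ g ∈ G, ∀ (R : Finset Ω) (hR : R.Nonempty) (i : Ω),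
          φ (unanimity R hR) i =
            φ (unanimity (R.image g) (hR.image g)) (g i))) := by
  open Stmt0Aux in
  constructor
  · rintro ⟨⟨hnull, heff⟩, hsym⟩
    refine ⟨?_, ?_, ?_⟩
    · intro R hR i hi
      apply hnull
      intro S
      show (if R ⊆ insert i S then (1:ℝ) else 0) = if R ⊆ S then 1 else 0
      simp [Finset.subset_insert_iff_of_notMem hi]
    · intro R hR
      rw [heff]
      show (if R ⊆ Finset.univ then (1:ℝ) else 0) = 1
      simp
    · intro g hg R hR i
      have := hsym g hg (unanimity R hR) (g i)
      rw [Stmt0Aux.permGame_unanimity g R hR] at this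
      rw [this]
      simp
  · rintro ⟨h1, h2, h3⟩
    have key3 : ∀ g ∈ G, ∀ (R : Finset Ω) (i : Ω),
        φ (Stmt0Aux.una' (R.image ⇑g)) i = φ (Stmt0Aux.una' R) (g⁻¹ i) := by
      intro g hg R i
      by_cases hR : R.Nonempty
      · rw [Stmt0Aux.una', Stmt0Aux.una', dif_pos hR, dif_pos (hR.image ⇑g)]
        have := h3 g hg R hR (g⁻¹ i)
        rw [this]
        simp
      · rw [Finset.not_nonempty_iff_eq_empty] at hR
        subst hR
        simp [Stmt0Aux.una']
    refine ⟨⟨?_, ?_⟩, ?_⟩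
    · intro v i hv
      rw [Stmt0Aux.phi_eq]
      apply Finset.sum_eq_zero
      intro R _
      by_cases hne : R.Nonempty
      · by_cases hiR : i ∈ R
        · rw [Stmt0Aux.divd_null _ i hv R hiR, zero_mul]
        · have hz : φ (Stmt0Aux.una' R) i = 0 := by
            rw [Stmt0Aux.una', dif_pos hne]
            exact h1 R hne i hiR
          rw [hz, mul_zero]
      · rw [Finset.not_nonempty_iff_eq_empty] at hne
        subst hne
        rw [Stmt0Aux.divd_empty _ v.2, zero_mul]
    · intro v
      have : ∀ i : Ω, φ v i = ∑ R ∈ Finset.univ.powerset,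
          divd (v : Finset Ω → ℝ) R * φ (Stmt0Aux.una' R) i := fun i => Stmt0Aux.phi_eq φ v i
      calc ∑ i, φ v i
          = ∑ i, ∑ R ∈ Finset.univ.powerset,
              divd (v : Finset Ω → ℝ) R * φ (Stmt0Aux.una' R) i := by
            exact Finset.sum_congr rfl fun i _ => this i
        _ = ∑ R ∈ Finset.univ.powerset,
              divd (v : Finset Ω → ℝ) R * ∑ i, φ (Stmt0Aux.una' R) i := by
            rw [Finset.sum_comm]
            exact Finset.sum_congr rfl fun R _ => (Finset.mul_sum _ _ _).symm
        _ = ∑ R ∈ Finset.univ.powerset, divd (v : Finset Ω → ℝ) R := by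
            refine Finset.sum_congr rfl fun R _ => ?_
            by_cases hne : R.Nonempty
            · rw [Stmt0Aux.una', dif_pos hne, h2 R hne, mul_one]
            · rw [Finset.not_nonempty_iff_eq_empty] at hne
              subst hne
              rw [Stmt0Aux.divd_empty _ v.2, zero_mul]
        _ = (v : Finset Ω → ℝ) Finset.univ := Stmt0Aux.inversion _ _
    · intro g hg v i
      rw [Stmt0Aux.phi_eq, Stmt0Aux.phi_eq]
      have hcoe : ((permGame g v : GameSpace Ω) : Finset Ω → ℝ)
          = fun S => (v : Finset Ω → ℝ) (S.image ⇑g⁻¹) := rfl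
      refine Finset.sum_nbij' (fun R => R.image ⇑g⁻¹) (fun R => R.image ⇑g) ?_ ?_ ?_ ?_ ?_
      · intro R _; exact Finset.mem_powerset.2 (Finset.subset_univ _)
      · intro R _; exact Finset.mem_powerset.2 (Finset.subset_univ _)
      · intro R _; exact Stmt0Aux.image_image_inv g R
      · intro R _; exact Stmt0Aux.image_inv_image g R
      · intro R _
        rw [hcoe, Stmt0Aux.divd_perm]
        congr 1
        have : R = (R.image ⇑g⁻¹).image ⇑g := (Stmt0Aux.image_image_inv g R).symm
        conv_lhs => rw [this]
        exact key3 g hg (R.image ⇑g⁻¹) i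
end

section
/- Let Ω be a finite set of players, G ≤ S_Ω a group of permutations, X = {(i,R) : i ∈ R ⊆ Ω} and χ = {R : ∅ ≠ R ⊆ Ω}, with G acting on X by g·(i,R) = (g·i, g·R) and on χ by g·R = g(R). Then the dimension of the affine space 𝒜_G of all G-symmetric quasi-values on Ω equals |X/G| − |χ/G|, the number of G-orbits of X minus the number of G-orbits of χ. -/
open scoped BigOperators

/-- Orbit equivalence of the action `g • R = g(R)` of `G` on the set
`χ = {R : ∅ ≠ R ⊆ Ω}` of nonempty coalitions. -/
def chiSetoid {Ω : Type*} [DecidableEq Ω] (G : Subgroup (Equiv.Perm Ω)) :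
    Setoid {R : Finset Ω // R.Nonempty} where
  r A B := ∃ g ∈ G, A.1.image g = B.1
  iseqv := by
    refine ⟨fun A => ⟨1, one_mem G, by simp⟩, ?_, ?_⟩
    · rintro A B ⟨g, hg, h⟩
      refine ⟨g⁻¹, inv_mem hg, ?_⟩
      rw [← h, Finset.image_image]
      have hcomp : (⇑g⁻¹ ∘ ⇑g) = id := by funext x; simp
      rw [hcomp, Finset.image_id]
    · rintro A B C ⟨g, hg, h1⟩ ⟨g', hg', h2⟩
      refine ⟨g' * g, mul_mem hg' hg, ?_⟩
      rw [← h2, ← h1, Finset.image_image]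
      rfl

/-- Orbit equivalence of the action `g • (i, R) = (g i, g(R))` of `G` on the set
`X = {(i, R) : i ∈ R ⊆ Ω}`. -/
def pairSetoid {Ω : Type*} [DecidableEq Ω] (G : Subgroup (Equiv.Perm Ω)) :
    Setoid {p : Ω × Finset Ω // p.1 ∈ p.2} where
  r x y := ∃ g ∈ G, g x.1.1 = y.1.1 ∧ x.1.2.image g = y.1.2
  iseqv := by
    refine ⟨fun x => ⟨1, one_mem G, by simp, by simp⟩, ?_, ?_⟩
    · rintro x y ⟨g, hg, h1, h2⟩
      refine ⟨g⁻¹, inv_mem hg, by rw [← h1]; simp, ?_⟩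
      rw [← h2, Finset.image_image]
      have hcomp : (⇑g⁻¹ ∘ ⇑g) = id := by funext x; simp
      rw [hcomp, Finset.image_id]
    · rintro x y z ⟨g, hg, h1, h2⟩ ⟨g', hg', h3, h4⟩
      refine ⟨g' * g, mul_mem hg' hg, by rw [← h3, ← h1]; rfl, ?_⟩
      rw [← h4, ← h2, Finset.image_image]
      rfl

set_option linter.unusedSectionVars false
set_option maxHeartbeats 1000000

section Aux
variable {Ω : Type*} [Fintype Ω] [DecidableEq Ω]

lemma neg_one_pow_sum_real (T : Finset Ω) :
    ∑ A ∈ T.powerset, (-1 : ℝ) ^ A.card = if T = ∅ then 1 else 0 := by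
  have h := Finset.sum_powerset_neg_one_pow_card (x := T)
  have : ((∑ m ∈ T.powerset, (-1 : ℤ) ^ m.card : ℤ) : ℝ) = ∑ A ∈ T.powerset, (-1:ℝ)^A.card := by
    push_cast; ring_nf
  rw [← this, h]
  split <;> norm_num

lemma moebius_inner (S T : Finset Ω) (hST : S ⊆ T) :
    ∑ R ∈ T.powerset.filter (fun R => S ⊆ R), (-1 : ℝ) ^ (R.card - S.card)
      = if S = T then 1 else 0 := by
  have key : ∑ R ∈ T.powerset.filter (fun R => S ⊆ R), (-1 : ℝ) ^ (R.card - S.card)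
      = ∑ A ∈ (T \ S).powerset, (-1 : ℝ) ^ A.card := by
    refine Finset.sum_nbij' (fun R => R \ S) (fun A => S ∪ A) ?_ ?_ ?_ ?_ ?_
    · intro R hR
      simp only [Finset.mem_filter, Finset.mem_powerset] at hR ⊢
      exact Finset.sdiff_subset_sdiff hR.1 le_rfl
    · intro A hA
      simp only [Finset.mem_powerset] at hA
      simp only [Finset.mem_filter, Finset.mem_powerset]
      exact ⟨Finset.union_subset hST (hA.trans (Finset.sdiff_subset)), Finset.subset_union_left⟩
    · intro R hR
      simp only [Finset.mem_filter, Finset.mem_powerset] at hR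
      show S ∪ R \ S = R
      exact Finset.union_sdiff_of_subset hR.2
    · intro A hA
      simp only [Finset.mem_powerset] at hA
      have : Disjoint S A := Finset.disjoint_left.mpr fun a haS haA =>
        (Finset.mem_sdiff.mp (hA haA)).2 haS
      show (S ∪ A) \ S = A
      rw [Finset.union_sdiff_cancel_left this]
    · intro R hR
      simp only [Finset.mem_filter, Finset.mem_powerset] at hR
      rw [Finset.card_sdiff_of_subset hR.2]
  rw [key, neg_one_pow_sum_real]
  congr 1
  simp only [eq_iff_iff]
  constructor
  · intro h
    exact Finset.Subset.antisymm hST (fun x hx => by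
      by_contra hxS
      exact absurd h (Finset.nonempty_iff_ne_empty.mp ⟨x, Finset.mem_sdiff.mpr ⟨hx, hxS⟩⟩))
  · rintro rfl; exact Finset.sdiff_self S

lemma moebius (f : Finset Ω → ℝ) (T : Finset Ω) :
    ∑ R ∈ T.powerset, ∑ S ∈ R.powerset, (-1 : ℝ) ^ (R.card - S.card) * f S = f T := by
  rw [Finset.sum_comm' (t' := T.powerset)
      (s' := fun S => T.powerset.filter (fun R => S ⊆ R))
      (by
        intro R S
        simp only [Finset.mem_powerset, Finset.mem_filter]
        constructor
        · rintro ⟨h1, h2⟩; exact ⟨⟨h1, h2⟩, h2.trans h1⟩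
        · rintro ⟨⟨h1, h2⟩, h3⟩; exact ⟨h1, h2⟩)]
  have : ∀ S ∈ T.powerset,
      ∑ R ∈ T.powerset.filter (fun R => S ⊆ R), (-1 : ℝ) ^ (R.card - S.card) * f S
        = (if S = T then 1 else 0) * f S := by
    intro S hS
    rw [← Finset.sum_mul, moebius_inner S T (Finset.mem_powerset.mp hS)]
  rw [Finset.sum_congr rfl this]
  simp only [ite_mul, one_mul, zero_mul]
  rw [Finset.sum_ite_eq' T.powerset T f]
  simp

/-! ### Dividends and the unanimity basis -/

variable (Ω) in
abbrev Chi := {R : Finset Ω // R.Nonempty}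

variable (Ω) in
abbrev XP := {p : Ω × Finset Ω // p.1 ∈ p.2}

/-- Unanimity game as indexed by `Chi`. -/
noncomputable def uB (R : Chi Ω) : GameSpace Ω := unanimity R.1 R.2

lemma uB_apply (R : Chi Ω) (S : Finset Ω) :
    (uB R : Finset Ω → ℝ) S = if R.1 ⊆ S then 1 else 0 := rfl

/-- Harsanyi dividends. -/
noncomputable def Dmap : GameSpace Ω →ₗ[ℝ] (Chi Ω → ℝ) where
  toFun v R := ∑ S ∈ R.1.powerset, (-1 : ℝ) ^ (R.1.card - S.card) * (v : Finset Ω → ℝ) S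
  map_add' v w := by
    funext R
    simp only [Submodule.coe_add, Pi.add_apply, mul_add, Finset.sum_add_distrib]
  map_smul' c v := by
    funext R
    simp only [Submodule.coe_smul, Pi.smul_apply, smul_eq_mul, RingHom.id_apply,
      Finset.mul_sum]
    congr 1; funext S; ring

/-- Reconstruction from dividends. -/
noncomputable def Umap : (Chi Ω → ℝ) →ₗ[ℝ] GameSpace Ω :=
  ∑ R : Chi Ω, (LinearMap.proj R).smulRight (uB R)

lemma Umap_apply (c : Chi Ω → ℝ) (S : Finset Ω) :
    (Umap c : Finset Ω → ℝ) S = ∑ R : Chi Ω, c R * (if R.1 ⊆ S then 1 else 0) := by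
  simp only [Umap, LinearMap.sum_apply, LinearMap.smulRight_apply, LinearMap.proj_apply]
  have : ((∑ x : Chi Ω, c x • uB x : GameSpace Ω) : Finset Ω → ℝ)
      = ∑ x : Chi Ω, c x • ((uB x : Finset Ω → ℝ)) := by
    have := map_sum ((GameSpace Ω).subtype) (fun x : Chi Ω => c x • uB x) Finset.univ
    simp only [Submodule.coe_subtype, map_smul] at this
    exact this
  rw [this]
  simp [uB_apply, smul_eq_mul]

lemma Umap_Dmap (v : GameSpace Ω) : Umap (Dmap v) = v := by
  apply Subtype.ext
  funext T
  rw [Umap_apply]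
  have step1 : ∑ R : Chi Ω, Dmap v R * (if R.1 ⊆ T then 1 else 0)
      = ∑ R : Finset Ω,
          (∑ S ∈ R.powerset, (-1 : ℝ) ^ (R.card - S.card) * (v : Finset Ω → ℝ) S)
            * (if R ⊆ T then 1 else 0) := by
    rw [← Finset.sum_filter_add_sum_filter_not Finset.univ (fun R : Finset Ω => R.Nonempty)]
    have h2 : ∑ R ∈ Finset.univ.filter (fun R : Finset Ω => ¬ R.Nonempty),
        (∑ S ∈ R.powerset, (-1 : ℝ) ^ (R.card - S.card) * (v : Finset Ω → ℝ) S)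
          * (if R ⊆ T then 1 else 0) = 0 := by
      apply Finset.sum_eq_zero
      intro R hR
      simp only [Finset.mem_filter, Finset.not_nonempty_iff_eq_empty] at hR
      rcases hR with ⟨-, rfl⟩
      have hv0 : (v : Finset Ω → ℝ) ∅ = 0 := v.2
      simp [hv0]
    rw [h2, add_zero]
    rw [Finset.sum_subtype (p := fun R : Finset Ω => R.Nonempty) (Finset.univ.filter (fun R : Finset Ω => R.Nonempty))
      (by intro x; simp) (fun R => (∑ S ∈ R.powerset, (-1 : ℝ) ^ (R.card - S.card) * (v : Finset Ω → ℝ) S) * (if R ⊆ T then 1 else 0))]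
    rfl
  rw [step1]
  have step2 : ∀ R ∈ Finset.univ, ¬ R ∈ T.powerset →
      (∑ S ∈ R.powerset, (-1 : ℝ) ^ (R.card - S.card) * (v : Finset Ω → ℝ) S)
        * (if R ⊆ T then 1 else 0) = 0 := by
    intro R _ hR
    rw [Finset.mem_powerset] at hR
    simp [hR]
  rw [← Finset.sum_subset (Finset.subset_univ T.powerset) step2]
  have : ∀ R ∈ T.powerset,
      (∑ S ∈ R.powerset, (-1 : ℝ) ^ (R.card - S.card) * (v : Finset Ω → ℝ) S)
        * (if R ⊆ T then 1 else 0)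
      = ∑ S ∈ R.powerset, (-1 : ℝ) ^ (R.card - S.card) * (v : Finset Ω → ℝ) S := by
    intro R hR
    rw [Finset.mem_powerset] at hR
    simp [hR]
  rw [Finset.sum_congr rfl this, moebius]

/-- Restriction equivalence: a game is determined by its values on nonempty coalitions. -/
noncomputable def Emap : GameSpace Ω ≃ₗ[ℝ] (Chi Ω → ℝ) where
  toFun v R := (v : Finset Ω → ℝ) R.1
  invFun c := ⟨fun S => if h : S.Nonempty then c ⟨S, h⟩ else 0, by
    show (if h : (∅ : Finset Ω).Nonempty then _ else 0) = 0
    rw [dif_neg (by simp)]⟩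
  map_add' v w := rfl
  map_smul' c v := rfl
  left_inv v := by
    apply Subtype.ext
    funext S
    show (if h : S.Nonempty then (v : Finset Ω → ℝ) S else 0) = (v : Finset Ω → ℝ) S
    by_cases h : S.Nonempty
    · rw [dif_pos h]
    · rw [dif_neg h]
      rw [Finset.not_nonempty_iff_eq_empty] at h
      subst h
      exact (v.2 : (v : Finset Ω → ℝ) ∅ = 0).symm
  right_inv c := by
    funext R
    show (if h : R.1.Nonempty then c ⟨R.1, h⟩ else 0) = c R
    rw [dif_pos R.2]

instance : FiniteDimensional ℝ (GameSpace Ω) := inferInstance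

lemma Umap_bijective : Function.Bijective (Umap (Ω := Ω)) := by
  have hsurj : Function.Surjective (Umap (Ω := Ω)) := fun v => ⟨Dmap v, Umap_Dmap v⟩
  have hdim : Module.finrank ℝ (Chi Ω → ℝ) = Module.finrank ℝ (GameSpace Ω) :=
    (Emap (Ω := Ω)).symm.finrank_eq
  exact ⟨(LinearMap.injective_iff_surjective_of_finrank_eq_finrank hdim).mpr hsurj, hsurj⟩

/-- The unanimity basis. -/
noncomputable def UBasis : Module.Basis (Chi Ω) ℝ (GameSpace Ω) :=
  Module.Basis.ofEquivFun (LinearEquiv.ofBijective Umap Umap_bijective).symm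

lemma UBasis_eq (R : Chi Ω) : UBasis (Ω := Ω) R = uB R := by
  simp only [UBasis, Module.Basis.coe_ofEquivFun]
  show (LinearEquiv.ofBijective Umap Umap_bijective).symm.symm (Pi.single R 1) = uB R
  rw [LinearEquiv.symm_symm]
  show Umap (Pi.single R 1) = uB R
  apply Subtype.ext
  funext S
  rw [Umap_apply]
  rw [Finset.sum_eq_single R]
  · simp [uB_apply]
  · intro b _ hb
    simp [Pi.single_eq_of_ne hb]
  · simp

lemma expand (v : GameSpace Ω) : v = ∑ R : Chi Ω, Dmap v R • uB R := by
  conv_lhs => rw [← Umap_Dmap v]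
  apply Subtype.ext
  have := map_sum ((GameSpace Ω).subtype) (fun R : Chi Ω => Dmap v R • uB R) Finset.univ
  simp only [Submodule.coe_subtype, map_smul] at this
  show ((Umap (Dmap v) : GameSpace Ω) : Finset Ω → ℝ) = _
  rw [this]
  funext S
  rw [Umap_apply]
  simp [uB_apply, smul_eq_mul]

/-! ### Null players and unanimity games -/

lemma isNullPlayer_unanimity {i : Ω} {R : Chi Ω} (hi : i ∉ R.1) :
    IsNullPlayer i (uB R) := by
  intro S
  rw [uB_apply, uB_apply]
  congr 1
  simp only [eq_iff_iff]
  exact Finset.subset_insert_iff_of_notMem hi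

lemma Dmap_eq_zero_of_null {i : Ω} {v : GameSpace Ω} (hnull : IsNullPlayer i v)
    {R : Chi Ω} (hi : i ∈ R.1) : Dmap v R = 0 := by
  show ∑ S ∈ R.1.powerset, (-1 : ℝ) ^ (R.1.card - S.card) * (v : Finset Ω → ℝ) S = 0
  have hR : R.1 = insert i (R.1.erase i) := (Finset.insert_erase hi).symm
  rw [hR, Finset.sum_powerset_insert (Finset.notMem_erase i R.1)]
  rw [← Finset.sum_add_distrib]
  apply Finset.sum_eq_zero
  intro S hS
  rw [Finset.mem_powerset] at hS
  have hiS : i ∉ S := fun h => Finset.notMem_erase i R.1 (hS h)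
  have hcard : (insert i S).card = S.card + 1 := Finset.card_insert_of_notMem hiS
  have hlt : S.card + 1 ≤ (insert i (R.1.erase i)).card := by
    rw [← hR]
    have h1 : S.card ≤ ((R.1).erase i).card := Finset.card_le_card hS
    rw [Finset.card_erase_of_mem hi] at h1
    have h2 : 1 ≤ R.1.card := Finset.card_pos.mpr ⟨i, hi⟩
    omega
  rw [hnull S, hcard]
  have : (insert i (R.1.erase i)).card - S.card
      = ((insert i (R.1.erase i)).card - (S.card + 1)) + 1 := by omega
  rw [this, pow_succ]
  ring

lemma chi_image_nonempty (g : Equiv.Perm Ω) (R : Chi Ω) : (R.1.image g).Nonempty :=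
  R.2.image g

/-- Action of a permutation on nonempty coalitions. -/
noncomputable def chiAct (g : Equiv.Perm Ω) (R : Chi Ω) : Chi Ω :=
  ⟨R.1.image g, chi_image_nonempty g R⟩

lemma mem_image_perm {g : Equiv.Perm Ω} {i : Ω} {R : Finset Ω} :
    g i ∈ R.image g ↔ i ∈ R := by
  constructor
  · intro h
    rcases Finset.mem_image.mp h with ⟨a, ha, hga⟩
    rwa [← g.injective hga]
  · exact fun h => Finset.mem_image_of_mem g h

lemma permGame_uB (g : Equiv.Perm Ω) (R : Chi Ω) :
    permGame g (uB R) = uB (chiAct g R) := by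
  apply Subtype.ext
  funext S
  show (uB R : Finset Ω → ℝ) (S.image (g⁻¹ : Equiv.Perm Ω)) = _
  rw [uB_apply, uB_apply]
  congr 1
  simp only [eq_iff_iff, chiAct]
  constructor
  · intro h x hx
    rcases Finset.mem_image.mp hx with ⟨a, ha, rfl⟩
    have := h ha
    rcases Finset.mem_image.mp this with ⟨b, hb, hba⟩
    have hgab : g a = b := by
      have := congrArg g hba
      simpa using this.symm
    rwa [hgab]
  · intro h x hx
    have : g x ∈ S := h (Finset.mem_image_of_mem g hx)
    refine Finset.mem_image.mpr ⟨g x, this, ?_⟩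
    simp

/-- `permGame` as a linear map. -/
noncomputable def permGameL (g : Equiv.Perm Ω) : GameSpace Ω →ₗ[ℝ] GameSpace Ω where
  toFun := permGame g
  map_add' v w := rfl
  map_smul' c v := rfl

lemma sum_Dmap (v : GameSpace Ω) :
    ∑ R : Chi Ω, Dmap v R = (v : Finset Ω → ℝ) Finset.univ := by
  conv_rhs => rw [expand v]
  have := map_sum ((GameSpace Ω).subtype) (fun R : Chi Ω => Dmap v R • uB R) Finset.univ
  simp only [Submodule.coe_subtype, map_smul] at this
  show _ = ((∑ R : Chi Ω, Dmap v R • uB R : GameSpace Ω) : Finset Ω → ℝ) Finset.univ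
  rw [this]
  simp [uB_apply, smul_eq_mul]

/-! ### Characterization of symmetric quasi-values via unanimity games -/

variable (G : Subgroup (Equiv.Perm Ω))

lemma quasi_sym_iff (φ : GameValue Ω) :
    (IsQuasiValue φ ∧ IsGSym G φ) ↔
      ((∀ (R : Chi Ω) (i : Ω), i ∉ R.1 → φ (uB R) i = 0) ∧
       (∀ R : Chi Ω, ∑ i, φ (uB R) i = 1) ∧
       (∀ g ∈ G, ∀ (R : Chi Ω) (i : Ω), φ (uB (chiAct g R)) (g i) = φ (uB R) i)) := by
  constructor
  · rintro ⟨⟨hnull, heff⟩, hsym⟩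
    refine ⟨?_, ?_, ?_⟩
    · intro R i hi
      exact hnull (uB R) i (isNullPlayer_unanimity hi)
    · intro R
      rw [heff (uB R)]
      rw [uB_apply]
      simp [Finset.subset_univ]
    · intro g hg R i
      have := hsym g hg (uB R) (g i)
      rw [permGame_uB] at this
      rwa [show (g⁻¹ : Equiv.Perm Ω) (g i) = i by simp] at this
  · rintro ⟨h1, h2, h3⟩
    refine ⟨⟨?_, ?_⟩, ?_⟩
    · intro v i hnull
      conv_lhs => rw [expand v]
      rw [map_sum]
      simp only [map_smul]
      rw [Finset.sum_apply]
      apply Finset.sum_eq_zero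
      intro R _
      by_cases hi : i ∈ R.1
      · simp [Dmap_eq_zero_of_null hnull hi]
      · simp only [Pi.smul_apply, smul_eq_mul]
        rw [h1 R i hi, mul_zero]
    · intro v
      conv_lhs => rw [expand v]
      rw [map_sum]
      simp only [map_smul]
      have : ∀ i : Ω, (∑ R : Chi Ω, Dmap v R • φ (uB R)) i
          = ∑ R : Chi Ω, Dmap v R * φ (uB R) i := by
        intro i
        rw [Finset.sum_apply]
        rfl
      simp only [this]
      rw [Finset.sum_comm]
      have h2' : ∀ R : Chi Ω, ∑ i : Ω, Dmap v R * φ (uB R) i = Dmap v R := by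
        intro R
        rw [← Finset.mul_sum, h2 R, mul_one]
      rw [Finset.sum_congr rfl (fun R _ => h2' R)]
      exact sum_Dmap v
    · intro g hg v i
      have hperm : permGame g v = ∑ R : Chi Ω, Dmap v R • uB (chiAct g R) := by
        show permGameL g v = _
        conv_lhs => rw [expand v]
        rw [map_sum]
        simp only [map_smul]
        congr 1
        funext R
        congr 1
        exact permGame_uB g R
      rw [hperm, map_sum, Finset.sum_apply]
      conv_rhs => rw [expand v]
      rw [map_sum, Finset.sum_apply]
      apply Finset.sum_congr rfl
      intro R _
      simp only [map_smul, Pi.smul_apply, smul_eq_mul]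
      congr 1
      have := h3 g hg R ((g⁻¹ : Equiv.Perm Ω) i)
      rwa [show g ((g⁻¹ : Equiv.Perm Ω) i) = i by simp] at this

/-- The direction submodule: linear game values vanishing-off-support on unanimity
games, with zero total share and `G`-equivariance. -/
noncomputable def Vsub : Submodule ℝ (GameValue Ω) where
  carrier := {ψ | (∀ (R : Chi Ω) (i : Ω), i ∉ R.1 → ψ (uB R) i = 0) ∧
    (∀ R : Chi Ω, ∑ i, ψ (uB R) i = 0) ∧
    (∀ g ∈ G, ∀ (R : Chi Ω) (i : Ω), ψ (uB (chiAct g R)) (g i) = ψ (uB R) i)}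
  add_mem' := by
    rintro a b ⟨ha1, ha2, ha3⟩ ⟨hb1, hb2, hb3⟩
    refine ⟨?_, ?_, ?_⟩
    · intro R i hi
      simp [ha1 R i hi, hb1 R i hi]
    · intro R
      simp only [LinearMap.add_apply, Pi.add_apply, Finset.sum_add_distrib]
      rw [ha2 R, hb2 R, add_zero]
    · intro g hg R i
      simp [ha3 g hg R i, hb3 g hg R i]
  zero_mem' := by
    refine ⟨fun R i _ => rfl, fun R => by simp, fun g hg R i => rfl⟩
  smul_mem' := by
    rintro c a ⟨ha1, ha2, ha3⟩
    refine ⟨?_, ?_, ?_⟩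
    · intro R i hi
      simp [ha1 R i hi]
    · intro R
      simp only [LinearMap.smul_apply, Pi.smul_apply, smul_eq_mul, ← Finset.mul_sum]
      rw [ha2 R, mul_zero]
    · intro g hg R i
      simp [ha3 g hg R i]

/-- The egalitarian value: splits each unanimity dividend evenly. -/
noncomputable def phi0 : GameValue Ω :=
  (UBasis (Ω := Ω)).constr ℝ (fun R => fun i => if i ∈ R.1 then ((R.1.card : ℝ))⁻¹ else 0)

lemma phi0_uB (R : Chi Ω) :
    phi0 (uB R) = fun i => if i ∈ R.1 then ((R.1.card : ℝ))⁻¹ else 0 := by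
  rw [phi0, ← UBasis_eq, Module.Basis.constr_basis]

lemma phi0_cond1 (R : Chi Ω) (i : Ω) (hi : i ∉ R.1) : phi0 (uB R) i = 0 := by
  rw [phi0_uB]; simp [hi]

lemma phi0_cond2 (R : Chi Ω) : ∑ i, phi0 (uB R) i = 1 := by
  simp only [phi0_uB]
  rw [Finset.sum_ite_mem]
  rw [Finset.univ_inter, Finset.sum_const, nsmul_eq_mul]
  have : (R.1.card : ℝ) ≠ 0 := Nat.cast_ne_zero.mpr (Finset.card_ne_zero_of_mem R.2.choose_spec)
  exact mul_inv_cancel₀ this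

lemma phi0_cond3 (g : Equiv.Perm Ω) (R : Chi Ω) (i : Ω) :
    phi0 (uB (chiAct g R)) (g i) = phi0 (uB R) i := by
  simp only [phi0_uB, chiAct]
  have hmem : g i ∈ R.1.image g ↔ i ∈ R.1 := mem_image_perm
  have hcard : (R.1.image g).card = R.1.card := Finset.card_image_of_injective _ g.injective
  by_cases hi : i ∈ R.1
  · rw [if_pos (hmem.mpr hi), if_pos hi, hcard]
  · rw [if_neg (fun h => hi (hmem.mp h)), if_neg hi]

lemma mem_S_iff_sub_mem (φ : GameValue Ω) :
    (IsQuasiValue φ ∧ IsGSym G φ) ↔ φ - phi0 ∈ Vsub G := by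
  rw [quasi_sym_iff]
  constructor
  · rintro ⟨h1, h2, h3⟩
    refine ⟨?_, ?_, ?_⟩
    · intro R i hi
      simp [h1 R i hi, phi0_cond1 R i hi]
    · intro R
      simp only [LinearMap.sub_apply, Pi.sub_apply, Finset.sum_sub_distrib]
      rw [h2 R, phi0_cond2 R, sub_self]
    · intro g hg R i
      simp only [LinearMap.sub_apply, Pi.sub_apply]
      rw [h3 g hg R i, phi0_cond3 g R i]
  · rintro ⟨h1, h2, h3⟩
    refine ⟨?_, ?_, ?_⟩
    · intro R i hi
      have := h1 R i hi
      simp only [LinearMap.sub_apply, Pi.sub_apply] at this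
      rw [phi0_cond1 R i hi] at this
      linarith
    · intro R
      have := h2 R
      simp only [LinearMap.sub_apply, Pi.sub_apply, Finset.sum_sub_distrib] at this
      rw [phi0_cond2 R] at this
      linarith
    · intro g hg R i
      have := h3 g hg R i
      simp only [LinearMap.sub_apply, Pi.sub_apply] at this
      rw [phi0_cond3 g R i] at this
      linarith

lemma direction_eq :
    (affineSpan ℝ {φ : GameValue Ω | IsQuasiValue φ ∧ IsGSym G φ}).direction = Vsub G := by
  rw [direction_affineSpan]
  apply le_antisymm
  · rw [vectorSpan_def]
    rw [Submodule.span_le]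
    rintro x hx
    rw [Set.mem_vsub] at hx
    rcases hx with ⟨a, ha, b, hb, rfl⟩
    have ha' := (mem_S_iff_sub_mem G a).mp ha
    have hb' := (mem_S_iff_sub_mem G b).mp hb
    have : a -ᵥ b = (a - phi0) - (b - phi0) := by
      show a - b = _
      abel
    rw [this]
    exact sub_mem ha' hb'
  · intro ψ hψ
    have hphi0 : phi0 ∈ {φ : GameValue Ω | IsQuasiValue φ ∧ IsGSym G φ} := by
      rw [Set.mem_setOf_eq, mem_S_iff_sub_mem G]
      simp only [sub_self]
      exact zero_mem _
    have hsum : phi0 + ψ ∈ {φ : GameValue Ω | IsQuasiValue φ ∧ IsGSym G φ} := by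
      rw [Set.mem_setOf_eq, mem_S_iff_sub_mem G]
      simpa using hψ
    have : ψ = (phi0 + ψ) -ᵥ phi0 := by
      show ψ = (phi0 + ψ) - phi0
      abel
    rw [this]
    exact vsub_set_subset_vectorSpan ℝ _ (Set.vsub_mem_vsub hsum hphi0)

/-! ### The orbit-counting linear algebra -/

/-- Map from pairs to coalitions. -/
def toChi (x : XP Ω) : Chi Ω := ⟨x.1.2, ⟨x.1.1, x.2⟩⟩

/-- Summing the shares of the members of each coalition, on the level of orbits. -/
noncomputable def Tmap : (Quotient (pairSetoid G) → ℝ) →ₗ[ℝ] (Quotient (chiSetoid G) → ℝ) where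
  toFun q := Quotient.lift
    (fun R : Chi Ω => ∑ i : Ω,
      if h : i ∈ R.1 then q (Quotient.mk (pairSetoid G) (⟨(i, R.1), h⟩ : XP Ω)) else 0)
    (by
      rintro R R' ⟨g, hg, himg⟩
      refine Fintype.sum_equiv (g : Equiv.Perm Ω) _ _ ?_
      intro i
      by_cases hi : i ∈ R.1
      · have hgi : g i ∈ R'.1 := himg ▸ Finset.mem_image_of_mem g hi
        rw [dif_pos hi, dif_pos hgi]
        congr 1
        exact Quotient.sound ⟨g, hg, rfl, himg⟩
      · have hgi : g i ∉ R'.1 := fun h => hi (mem_image_perm.mp (himg ▸ h))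
        rw [dif_neg hi, dif_neg hgi])
  map_add' q q' := by
    funext n
    refine Quotient.inductionOn n (fun R => ?_)
    show (∑ i : Ω, if h : i ∈ R.1 then (q + q') _ else 0) = _
    simp only [Pi.add_apply]
    show _ = (∑ i : Ω, if h : i ∈ R.1 then q _ else 0) + (∑ i : Ω, if h : i ∈ R.1 then q' _ else 0)
    rw [← Finset.sum_add_distrib]
    apply Finset.sum_congr rfl
    intro i _
    split <;> simp
  map_smul' c q := by
    funext n
    refine Quotient.inductionOn n (fun R => ?_)
    show (∑ i : Ω, if h : i ∈ R.1 then (c • q) _ else 0) = _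
    simp only [Pi.smul_apply, smul_eq_mul, RingHom.id_apply]
    show _ = c * ∑ i : Ω, if h : i ∈ R.1 then q _ else 0
    rw [Finset.mul_sum]
    apply Finset.sum_congr rfl
    intro i _
    split <;> simp

lemma Tmap_mk (q : Quotient (pairSetoid G) → ℝ) (R : Chi Ω) :
    Tmap G q (Quotient.mk (chiSetoid G) R)
      = ∑ i : Ω, if h : i ∈ R.1 then q (Quotient.mk (pairSetoid G) (⟨(i, R.1), h⟩ : XP Ω)) else 0 :=
  rfl

lemma Tmap_surjective : Function.Surjective (Tmap G) := by
  intro r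
  have wd : ∀ x y : XP Ω, (pairSetoid G).r x y →
      r (Quotient.mk (chiSetoid G) (toChi x)) / (x.1.2.card : ℝ)
        = r (Quotient.mk (chiSetoid G) (toChi y)) / (y.1.2.card : ℝ) := by
    rintro x y ⟨g, hg, h1, h2⟩
    have hcls : Quotient.mk (chiSetoid G) (toChi x) = Quotient.mk (chiSetoid G) (toChi y) :=
      Quotient.sound ⟨g, hg, h2⟩
    have hcard : y.1.2.card = x.1.2.card := by
      rw [← h2, Finset.card_image_of_injective _ g.injective]
    rw [hcls, hcard]
  refine ⟨Quotient.lift _ wd, ?_⟩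
  funext n
  refine Quotient.inductionOn n (fun R => ?_)
  rw [Tmap_mk]
  have heval : ∀ (i : Ω) (h : i ∈ R.1),
      (Quotient.lift _ wd) (Quotient.mk (pairSetoid G) (⟨(i, R.1), h⟩ : XP Ω))
        = r (Quotient.mk (chiSetoid G) R) / (R.1.card : ℝ) := by
    intro i h
    show r (Quotient.mk (chiSetoid G) (toChi ⟨(i, R.1), h⟩)) / ((R.1).card : ℝ) = _
    congr 2
  have : ∀ i : Ω, (if h : i ∈ R.1 then
        (Quotient.lift _ wd) (Quotient.mk (pairSetoid G) (⟨(i, R.1), h⟩ : XP Ω)) else 0)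
      = if i ∈ R.1 then r (Quotient.mk (chiSetoid G) R) / (R.1.card : ℝ) else 0 := by
    intro i
    by_cases h : i ∈ R.1
    · rw [dif_pos h, if_pos h, heval i h]
    · rw [dif_neg h, if_neg h]
  rw [Finset.sum_congr rfl (fun i _ => this i)]
  rw [Finset.sum_ite_mem, Finset.univ_inter, Finset.sum_const, nsmul_eq_mul]
  have hcard : (R.1.card : ℝ) ≠ 0 := Nat.cast_ne_zero.mpr (Finset.card_ne_zero_of_mem R.2.choose_spec)
  field_simp

lemma Vsub_spec (psi : ↥(Vsub G)) :
    (∀ (R : Chi Ω) (i : Ω), i ∉ R.1 → psi.1 (uB R) i = 0) ∧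
    (∀ R : Chi Ω, ∑ i, psi.1 (uB R) i = 0) ∧
    (∀ g ∈ G, ∀ (R : Chi Ω) (i : Ω), psi.1 (uB (chiAct g R)) (g i) = psi.1 (uB R) i) := psi.2

/-- From a symmetric value to an invariant function on pair-orbits. -/
noncomputable def Fm : ↥(Vsub G) →ₗ[ℝ] (Quotient (pairSetoid G) → ℝ) where
  toFun psi := Quotient.lift (fun x : XP Ω => psi.1 (uB (toChi x)) x.1.1)
    (by
      rintro x y ⟨g, hg, h1, h2⟩
      have hy : toChi y = chiAct g (toChi x) := Subtype.ext h2.symm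
      have hE := (Vsub_spec G psi).2.2 g hg (toChi x) x.1.1
      show psi.1 (uB (toChi x)) x.1.1 = psi.1 (uB (toChi y)) y.1.1
      rw [hy, ← h1]
      exact hE.symm)
  map_add' a b := by
    funext n
    refine Quotient.inductionOn n (fun x => ?_)
    rfl
  map_smul' c a := by
    funext n
    refine Quotient.inductionOn n (fun x => ?_)
    rfl

lemma Fm_ker (psi : ↥(Vsub G)) : Tmap G (Fm G psi) = 0 := by
  funext n
  refine Quotient.inductionOn n (fun R => ?_)
  rw [Tmap_mk]
  have : ∀ i : Ω, (if h : i ∈ R.1 then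
      (Fm G psi) (Quotient.mk (pairSetoid G) (⟨(i, R.1), h⟩ : XP Ω)) else 0)
      = psi.1 (uB R) i := by
    intro i
    by_cases h : i ∈ R.1
    · rw [dif_pos h]
      show psi.1 (uB (toChi ⟨(i, R.1), h⟩)) i = _
      congr 2
    · rw [dif_neg h]
      exact ((Vsub_spec G psi).1 R i h).symm
  rw [Finset.sum_congr rfl (fun i _ => this i)]
  rw [(Vsub_spec G psi).2.1 R]
  rfl

/-- From invariant pair-orbit data to a prescription on unanimity games. -/
noncomputable def Jmap : (Quotient (pairSetoid G) → ℝ) →ₗ[ℝ] (Chi Ω → Ω → ℝ) where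
  toFun q R i := if h : i ∈ R.1 then q (Quotient.mk (pairSetoid G) (⟨(i, R.1), h⟩ : XP Ω)) else 0
  map_add' a b := by
    funext R i
    show (dite (i ∈ R.1) _ _ : ℝ) = (dite (i ∈ R.1) _ _ : ℝ) + (dite (i ∈ R.1) _ _ : ℝ)
    split <;> simp
  map_smul' c a := by
    funext R i
    show dite (i ∈ R.1) _ _ = c * dite (i ∈ R.1) _ _
    split <;> simp

/-- From invariant pair-orbit data to a game value. -/
noncomputable def Gm0 : (Quotient (pairSetoid G) → ℝ) →ₗ[ℝ] GameValue Ω :=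
  LinearMap.comp ((UBasis (Ω := Ω)).constr ℝ).toLinearMap (Jmap G)

lemma Gm0_uB (q : Quotient (pairSetoid G) → ℝ) (R : Chi Ω) :
    Gm0 G q (uB R) = Jmap G q R := by
  show (UBasis (Ω := Ω)).constr ℝ (Jmap G q) (uB R) = _
  rw [← UBasis_eq, Module.Basis.constr_basis]

lemma Gm0_mem (q : Quotient (pairSetoid G) → ℝ) (hq : Tmap G q = 0) :
    Gm0 G q ∈ Vsub G := by
  refine ⟨?_, ?_, ?_⟩
  · intro R i hi
    rw [Gm0_uB]
    exact dif_neg hi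
  · intro R
    have h0 : Tmap G q (Quotient.mk (chiSetoid G) R) = 0 := by rw [hq]; rfl
    rw [Tmap_mk] at h0
    rw [← h0]
    apply Finset.sum_congr rfl
    intro i _
    rw [Gm0_uB]
    rfl
  · intro g hg R i
    rw [Gm0_uB, Gm0_uB]
    show dite _ _ _ = dite _ _ _
    by_cases hi : i ∈ R.1
    · have hgi : g i ∈ (chiAct g R).1 := Finset.mem_image_of_mem g hi
      rw [dif_pos hgi, dif_pos hi]
      congr 1
      refine Quotient.sound ⟨g⁻¹, inv_mem hg, by simp, ?_⟩
      show Finset.image (⇑g⁻¹) (chiAct g R).1 = R.1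
      simp only [chiAct, Finset.image_image]
      have : (⇑(g⁻¹ : Equiv.Perm Ω) ∘ ⇑g) = id := by funext x; simp
      rw [this, Finset.image_id]
    · have hgi : g i ∉ (chiAct g R).1 := fun h => hi (mem_image_perm.mp h)
      rw [dif_neg hgi, dif_neg hi]

noncomputable def Fm' : ↥(Vsub G) →ₗ[ℝ] ↥(LinearMap.ker (Tmap G)) :=
  LinearMap.codRestrict _ (Fm G) (fun psi => LinearMap.mem_ker.mpr (Fm_ker G psi))

noncomputable def Gm : ↥(LinearMap.ker (Tmap G)) →ₗ[ℝ] ↥(Vsub G) :=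
  LinearMap.codRestrict _ ((Gm0 G).comp (LinearMap.ker (Tmap G)).subtype)
    (fun q => Gm0_mem G q.1 (LinearMap.mem_ker.mp q.2))

lemma Fm_Gm (q : ↥(LinearMap.ker (Tmap G))) : Fm' G (Gm G q) = q := by
  apply Subtype.ext
  funext n
  refine Quotient.inductionOn n (fun x => ?_)
  show (Gm0 G q.1) (uB (toChi x)) x.1.1 = q.1 (Quotient.mk (pairSetoid G) x)
  rw [Gm0_uB]
  show (if h : (x.1).1 ∈ (x.1).2 then
      q.1 (Quotient.mk (pairSetoid G) (⟨((x.1).1, (x.1).2), h⟩ : XP Ω)) else 0)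
    = q.1 (Quotient.mk (pairSetoid G) x)
  rw [dif_pos x.2]

lemma Gm_Fm (psi : ↥(Vsub G)) : Gm G (Fm' G psi) = psi := by
  apply Subtype.ext
  apply Module.Basis.ext (UBasis (Ω := Ω))
  intro R
  rw [UBasis_eq]
  show (Gm0 G (Fm G psi)) (uB R) = psi.1 (uB R)
  rw [Gm0_uB]
  funext i
  show dite _ _ _ = _
  by_cases h : i ∈ R.1
  · rw [dif_pos h]
    show psi.1 (uB (toChi ⟨(i, R.1), h⟩)) i = _
    congr 2
  · rw [dif_neg h]
    exact ((Vsub_spec G psi).1 R i h).symm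

noncomputable def VKequiv : ↥(Vsub G) ≃ₗ[ℝ] ↥(LinearMap.ker (Tmap G)) :=
  LinearEquiv.ofLinear (Fm' G) (Gm G)
    (LinearMap.ext (Fm_Gm G)) (LinearMap.ext (Gm_Fm G))

lemma finrank_Vsub :
    Module.finrank ℝ ↥(Vsub G)
      = Nat.card (Quotient (pairSetoid G)) - Nat.card (Quotient (chiSetoid G)) := by
  haveI : Finite (Quotient (pairSetoid G)) := Quotient.finite _
  haveI : Finite (Quotient (chiSetoid G)) := Quotient.finite _
  haveI fM : Fintype (Quotient (pairSetoid G)) := Fintype.ofFinite _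
  haveI fN : Fintype (Quotient (chiSetoid G)) := Fintype.ofFinite _
  have hdom : Module.finrank ℝ (Quotient (pairSetoid G) → ℝ) = Fintype.card (Quotient (pairSetoid G)) :=
    Module.finrank_fintype_fun_eq_card ℝ
  have hcod : Module.finrank ℝ (Quotient (chiSetoid G) → ℝ) = Fintype.card (Quotient (chiSetoid G)) :=
    Module.finrank_fintype_fun_eq_card ℝ
  have hrn := LinearMap.finrank_range_add_finrank_ker (Tmap G)
  have hrange : LinearMap.range (Tmap G) = ⊤ := LinearMap.range_eq_top.mpr (Tmap_surjective G)
  rw [hrange] at hrn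
  rw [finrank_top] at hrn
  have hV : Module.finrank ℝ ↥(Vsub G) = Module.finrank ℝ ↥(LinearMap.ker (Tmap G)) :=
    (VKequiv G).finrank_eq
  rw [hV, Nat.card_eq_fintype_card, Nat.card_eq_fintype_card]
  omega

end Aux





/-- the dimension of the affine space `𝒜_G` of `G`-symmetric
quasi-values equals `|X/G| - |χ/G|`, where `X = {(i,R) : i ∈ R ⊆ Ω}` and
`χ = {R : ∅ ≠ R ⊆ Ω}` with the natural `G`-actions. -/
theorem stmt2 {Ω : Type*} [Fintype Ω] [DecidableEq Ω] (G : Subgroup (Equiv.Perm Ω)) :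
    Module.finrank ℝ
        (affineSpan ℝ {φ : GameValue Ω | IsQuasiValue φ ∧ IsGSym G φ}).direction =
      Nat.card (Quotient (pairSetoid G)) - Nat.card (Quotient (chiSetoid G)) := by
  rw [direction_eq G, finrank_Vsub G]
end

section
/- Let Ω be a finite set of n players and G ≤ S_Ω a group of permutations. Then the dimension of the affine space 𝒜_G of all G-symmetric quasi-values satisfies dim 𝒜_G = (1/|G|) · ( ∑_{π∈G} fix(π) · 2^{c(π)−1} − ∑_{π∈G} 2^{c(π)} ) + 1, where fix(π) is the number of fixed points of π and c(π) is the number of cycles of π (counting fixed points as cycles of length 1). Equivalently, dim 𝒜_G = (∂Z_G/∂x₁ − Z_G)|_{(2,2,…,2)} + 1, where Z_G(x₁,…,x_n) = (1/|G|) ∑_{π∈G} x₁^{j₁(π)} ⋯ x_n^{j_n(π)} is the cycle index of G and j_k(π) is the number of cycles of length k in π. -/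
open scoped BigOperators

/-- The number of fixed points of a permutation. -/
def numFixed {Ω : Type*} [Fintype Ω] [DecidableEq Ω] (π : Equiv.Perm Ω) : ℕ :=
  (Finset.univ.filter fun i => π i = i).card

/-- The number of cycles of a permutation, counting fixed points as cycles of
length `1`. -/
def numCycles {Ω : Type*} [Fintype Ω] [DecidableEq Ω] (π : Equiv.Perm Ω) : ℕ :=
  π.cycleType.card + numFixed π

lemma perm_apply_inv_self {β : Type*} (f : Equiv.Perm β) (x : β) : f (f⁻¹ x) = x :=
  Equiv.apply_symm_apply f x

lemma perm_inv_apply_self {β : Type*} (f : Equiv.Perm β) (x : β) : f⁻¹ (f x) = x :=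
  Equiv.symm_apply_apply f x

namespace Stmt3Aux
open Finset

variable {Ω : Type*} [DecidableEq Ω]

def coeffFn (v : Finset Ω → ℝ) (R : Finset Ω) : ℝ :=
  ∑ S ∈ R.powerset, (-1 : ℝ) ^ (R.card - S.card) * v S


lemma coeffFn_empty (v : Finset Ω → ℝ) : coeffFn v ∅ = v ∅ := by simp [coeffFn]

lemma inner_sum {S T : Finset Ω} (hST : S ⊆ T) :
    ∑ R ∈ T.powerset.filter (fun R => S ⊆ R), (-1 : ℝ) ^ (R.card - S.card)
      = if S = T then 1 else 0 := by
  have hbij : ∑ R ∈ T.powerset.filter (fun R => S ⊆ R), (-1 : ℝ) ^ (R.card - S.card)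
      = ∑ U ∈ (T \ S).powerset, (-1 : ℝ) ^ U.card := by
    refine Finset.sum_nbij' (fun R => R \ S) (fun U => S ∪ U) ?_ ?_ ?_ ?_ ?_
    · intro R hR
      simp only [mem_filter, mem_powerset] at hR
      exact mem_powerset.2 (sdiff_subset_sdiff hR.1 le_rfl)
    · intro U hU
      simp only [mem_powerset] at hU
      refine mem_filter.2 ⟨mem_powerset.2 (union_subset hST (hU.trans sdiff_subset)), subset_union_left⟩
    · intro R hR
      simp only [mem_filter, mem_powerset] at hR
      exact union_sdiff_of_subset hR.2
    · intro U hU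
      simp only [mem_powerset] at hU
      exact union_sdiff_cancel_left (disjoint_of_subset_right hU disjoint_sdiff)
    · intro R hR
      simp only [mem_filter, mem_powerset] at hR
      rw [card_sdiff_of_subset hR.2]
  rw [hbij]
  have := @Finset.sum_powerset_neg_one_pow_card Ω _ (T \ S)
  have hcast : ∑ U ∈ (T \ S).powerset, (-1 : ℝ) ^ U.card
      = ((∑ U ∈ (T \ S).powerset, (-1 : ℤ) ^ U.card : ℤ) : ℝ) := by
    push_cast; rfl
  rw [hcast, this]
  by_cases h : T \ S = ∅
  · have : S = T := subset_antisymm hST (sdiff_eq_empty_iff_subset.mp h)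
    simp [h, this]
  · have : ¬ S = T := fun hh => h (by simp [hh])
    simp [h, this]

/-- Möbius inversion. -/
lemma moebius (v : Finset Ω → ℝ) (T : Finset Ω) :
    ∑ R ∈ T.powerset, coeffFn v R = v T := by
  unfold coeffFn
  rw [Finset.sum_comm' (s := T.powerset) (t := fun R => R.powerset)
    (t' := T.powerset) (s' := fun S => T.powerset.filter (fun R => S ⊆ R))
    (f := fun R S => (-1 : ℝ) ^ (R.card - S.card) * v S) ?_]
  · have : ∀ S ∈ T.powerset,
        (∑ R ∈ T.powerset.filter (fun R => S ⊆ R), (-1 : ℝ) ^ (R.card - S.card) * v S)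
        = (if S = T then 1 else 0) * v S := by
      intro S hS
      rw [← Finset.sum_mul, inner_sum (mem_powerset.1 hS)]
    rw [Finset.sum_congr rfl this]
    simp
  · intro R S
    simp only [mem_powerset, mem_filter]
    constructor
    · rintro ⟨h1, h2⟩; exact ⟨⟨h1, h2⟩, h2.trans h1⟩
    · rintro ⟨⟨h1, h2⟩, h3⟩; exact ⟨h1, h2⟩


lemma neg_one_pow_nat_sub (d u : ℕ) (h : u ≤ d) :
    (-1 : ℝ) ^ (d - u) = (-1) ^ d * (-1) ^ u := by
  have h2 : (-1 : ℝ) ^ u * (-1) ^ u = 1 := by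
    rw [← pow_add]; exact Even.neg_one_pow ⟨u, rfl⟩
  calc (-1 : ℝ) ^ (d - u) = (-1) ^ (d - u) * ((-1) ^ u * (-1) ^ u) := by rw [h2, mul_one]
    _ = ((-1) ^ (d - u) * (-1) ^ u) * (-1) ^ u := by ring
    _ = (-1) ^ d * (-1) ^ u := by rw [← pow_add, Nat.sub_add_cancel h]

lemma alt_sum' {S T : Finset Ω} (hST : S ⊆ T) :
    ∑ R ∈ T.powerset.filter (fun R => S ⊆ R), (-1 : ℝ) ^ (T.card - R.card)
      = if S = T then 1 else 0 := by
  have hbij : ∑ R ∈ T.powerset.filter (fun R => S ⊆ R), (-1 : ℝ) ^ (T.card - R.card)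
      = ∑ U ∈ (T \ S).powerset, (-1 : ℝ) ^ (T.card - (S.card + U.card)) := by
    refine Finset.sum_nbij' (fun R => R \ S) (fun U => S ∪ U) ?_ ?_ ?_ ?_ ?_
    · intro R hR
      simp only [mem_filter, mem_powerset] at hR
      exact mem_powerset.2 (sdiff_subset_sdiff hR.1 le_rfl)
    · intro U hU
      simp only [mem_powerset] at hU
      exact mem_filter.2 ⟨mem_powerset.2 (union_subset hST (hU.trans sdiff_subset)),
        subset_union_left⟩
    · intro R hR
      simp only [mem_filter, mem_powerset] at hR
      exact union_sdiff_of_subset hR.2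
    · intro U hU
      simp only [mem_powerset] at hU
      exact union_sdiff_cancel_left (disjoint_of_subset_right hU disjoint_sdiff)
    · intro R hR
      simp only [mem_filter, mem_powerset] at hR
      rw [card_sdiff_of_subset hR.2]
      have := card_le_card hR.2
      have := card_le_card hR.1
      congr 1
      omega
  rw [hbij]
  have hd : ∀ U ∈ (T \ S).powerset, (-1 : ℝ) ^ (T.card - (S.card + U.card))
      = (-1) ^ (T.card - S.card) * (-1) ^ U.card := by
    intro U hU
    have hU' : U.card ≤ T.card - S.card := by
      rw [← card_sdiff_of_subset hST]; exact card_le_card (mem_powerset.1 hU)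
    rw [← Nat.sub_sub, neg_one_pow_nat_sub _ _ hU']
  rw [Finset.sum_congr rfl hd, ← Finset.mul_sum]
  have hcast : ∑ U ∈ (T \ S).powerset, (-1 : ℝ) ^ U.card
      = ((∑ U ∈ (T \ S).powerset, (-1 : ℤ) ^ U.card : ℤ) : ℝ) := by push_cast; rfl
  rw [hcast, Finset.sum_powerset_neg_one_pow_card]
  by_cases h : T \ S = ∅
  · have h2 : S = T := subset_antisymm hST (sdiff_eq_empty_iff_subset.mp h)
    simp [h, h2]
  · have h2 : ¬ S = T := fun hh => h (by simp [hh])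
    simp [h, h2]

lemma coeffFn_unanimity (R' R : Finset Ω) :
    coeffFn (fun S => if R' ⊆ S then (1 : ℝ) else 0) R = if R = R' then 1 else 0 := by
  unfold coeffFn
  have : ∀ S ∈ R.powerset, (-1 : ℝ) ^ (R.card - S.card) * (if R' ⊆ S then (1:ℝ) else 0)
      = if R' ⊆ S then (-1 : ℝ) ^ (R.card - S.card) else 0 := by
    intro S _; split <;> simp
  rw [Finset.sum_congr rfl this, ← Finset.sum_filter]
  by_cases h : R' ⊆ R
  · rw [alt_sum' h]
    by_cases h2 : R' = R <;> simp [h2, eq_comm]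
  · have hfe : R.powerset.filter (fun S => R' ⊆ S) = ∅ := by
      refine filter_eq_empty_iff.2 ?_
      intro S hS hRS
      exact h (hRS.trans (mem_powerset.1 hS))
    have h2 : ¬ R = R' := fun hh => h (le_of_eq hh.symm)
    simp [hfe, h2]

section FT
variable [Fintype Ω]

abbrev NE (Ω : Type*) [DecidableEq Ω] := {R : Finset Ω // R.Nonempty}

lemma coeffFn_coe_unanimity (R : NE Ω) (T : Finset Ω) :
    coeffFn ((unanimity R.1 R.2 : GameSpace Ω) : Finset Ω → ℝ) T
      = if T = R.1 then 1 else 0 := coeffFn_unanimity R.1 T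

lemma sum_nonempty_eq (F : Finset Ω → ℝ) (hF : F ∅ = 0) :
    ∑ R : NE Ω, F R.1 = ∑ R ∈ (univ : Finset Ω).powerset, F R := by
  rw [Finset.powerset_univ]
  rw [← Finset.sum_filter_add_sum_filter_not univ (fun R : Finset Ω => R.Nonempty) F]
  have h1 : ∑ R ∈ univ.filter (fun R : Finset Ω => ¬ R.Nonempty), F R = 0 := by
    refine Finset.sum_eq_zero ?_
    intro R hR
    simp only [mem_filter, Finset.not_nonempty_iff_eq_empty] at hR
    rw [hR.2, hF]
  rw [h1, add_zero]
  rw [Finset.sum_subtype (p := fun R : Finset Ω => R.Nonempty)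
    (univ.filter (fun R : Finset Ω => R.Nonempty)) (by intro x; simp) F]

/-- Expansion of a game in unanimity games. -/
lemma expansion (v : GameSpace Ω) :
    v = ∑ R : NE Ω, coeffFn (v : Finset Ω → ℝ) R.1 • unanimity R.1 R.2 := by
  apply Subtype.ext
  funext T
  have hco : ((∑ R : NE Ω, coeffFn (v : Finset Ω → ℝ) R.1 • unanimity R.1 R.2 :
      GameSpace Ω) : Finset Ω → ℝ) T
      = ∑ R : NE Ω, coeffFn (v : Finset Ω → ℝ) R.1 *
          (if R.1 ⊆ T then (1 : ℝ) else 0) := by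
    rw [Submodule.coe_sum, Finset.sum_apply]
    rfl
  rw [hco]
  have := sum_nonempty_eq (fun R => coeffFn (v : Finset Ω → ℝ) R * (if R ⊆ T then (1:ℝ) else 0))
    (by simp [coeffFn_empty]; exact v.2)
  rw [this]
  have h2 : ∀ R ∈ (univ : Finset Ω).powerset,
      coeffFn (v : Finset Ω → ℝ) R * (if R ⊆ T then (1:ℝ) else 0)
      = if R ⊆ T then coeffFn (v : Finset Ω → ℝ) R else 0 := by
    intro R _; split <;> simp
  rw [Finset.sum_congr rfl h2, ← Finset.sum_filter]
  have h3 : (univ : Finset Ω).powerset.filter (fun R => R ⊆ T) = T.powerset := by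
    ext R; simp [Finset.mem_powerset, Finset.subset_univ]
  rw [h3, moebius]

end FT
section Equiv
variable [Fintype Ω]

abbrev XC (Ω : Type*) [DecidableEq Ω] [Fintype Ω] := NE Ω × Ω → ℝ

lemma coeffFn_add (v w : GameSpace Ω) (R : Finset Ω) :
    coeffFn ((v + w : GameSpace Ω) : Finset Ω → ℝ) R
      = coeffFn (v : Finset Ω → ℝ) R + coeffFn (w : Finset Ω → ℝ) R := by
  unfold coeffFn
  rw [← Finset.sum_add_distrib]
  refine Finset.sum_congr rfl fun S _ => ?_
  have : ((v + w : GameSpace Ω) : Finset Ω → ℝ) S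
      = (v : Finset Ω → ℝ) S + (w : Finset Ω → ℝ) S := rfl
  rw [this]; ring

lemma coeffFn_smul (c : ℝ) (v : GameSpace Ω) (R : Finset Ω) :
    coeffFn ((c • v : GameSpace Ω) : Finset Ω → ℝ) R = c * coeffFn (v : Finset Ω → ℝ) R := by
  unfold coeffFn
  rw [Finset.mul_sum]
  refine Finset.sum_congr rfl fun S _ => ?_
  have : ((c • v : GameSpace Ω) : Finset Ω → ℝ) S = c * (v : Finset Ω → ℝ) S := rfl
  rw [this]; ring

/-- toCoords -/
noncomputable def toC : GameValue Ω →ₗ[ℝ] XC Ω where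
  toFun φ := fun p => φ (unanimity p.1.1 p.1.2) p.2
  map_add' φ ψ := by funext p; rfl
  map_smul' c φ := by funext p; rfl

/-- ofCoords -/
noncomputable def ofC : XC Ω →ₗ[ℝ] GameValue Ω where
  toFun a :=
    { toFun := fun v i => ∑ R : NE Ω, coeffFn (v : Finset Ω → ℝ) R.1 * a (R, i)
      map_add' := by
        intro v w
        funext i
        simp only [Pi.add_apply]
        rw [← Finset.sum_add_distrib]
        refine Finset.sum_congr rfl fun R _ => ?_
        rw [coeffFn_add]; ring
      map_smul' := by
        intro c v
        funext i
        simp only [Pi.smul_apply, RingHom.id_apply, smul_eq_mul]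
        rw [Finset.mul_sum]
        refine Finset.sum_congr rfl fun R _ => ?_
        rw [coeffFn_smul]; ring }
  map_add' a b := by
    apply LinearMap.ext; intro v; funext i
    simp only [LinearMap.coe_mk, AddHom.coe_mk, LinearMap.add_apply, Pi.add_apply]
    rw [← Finset.sum_add_distrib]
    exact Finset.sum_congr rfl fun R _ => by ring
  map_smul' c a := by
    apply LinearMap.ext; intro v; funext i
    simp only [LinearMap.coe_mk, AddHom.coe_mk, RingHom.id_apply, LinearMap.smul_apply,
      Pi.smul_apply, smul_eq_mul]
    rw [Finset.mul_sum]
    exact Finset.sum_congr rfl fun R _ => by ring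

lemma phi_eq (φ : GameValue Ω) (v : GameSpace Ω) (i : Ω) :
    φ v i = ∑ R : NE Ω, coeffFn (v : Finset Ω → ℝ) R.1 * φ (unanimity R.1 R.2) i := by
  conv_lhs => rw [expansion v]
  rw [map_sum]
  rw [Finset.sum_apply]
  refine Finset.sum_congr rfl fun R _ => ?_
  rw [map_smul]
  rfl

noncomputable def coordEquiv : GameValue Ω ≃ₗ[ℝ] XC Ω :=
  LinearEquiv.ofLinear toC ofC
    (by
      apply LinearMap.ext; intro a; funext p
      show ∑ R : NE Ω, coeffFn ((unanimity p.1.1 p.1.2 : GameSpace Ω) : Finset Ω → ℝ) R.1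
          * a (R, p.2) = a p
      have h : ∀ R : NE Ω, coeffFn ((unanimity p.1.1 p.1.2 : GameSpace Ω) : Finset Ω → ℝ) R.1
          * a (R, p.2) = if R = p.1 then a (R, p.2) else 0 := by
        intro R
        rw [coeffFn_coe_unanimity]
        have : R.1 = p.1.1 ↔ R = p.1 := Subtype.ext_iff.symm
        by_cases hR : R = p.1
        · simp [hR]
        · have : ¬ (R.1 = p.1.1) := fun hh => hR (Subtype.ext hh)
          simp [hR, this]
      rw [Finset.sum_congr rfl (fun R _ => h R), Finset.sum_ite_eq' Finset.univ p.1
        (fun R => a (R, p.2))]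
      simp)
    (by
      apply LinearMap.ext; intro φ
      apply LinearMap.ext; intro v
      funext i
      exact (phi_eq φ v i).symm)

lemma coordEquiv_apply (φ : GameValue Ω) (p : NE Ω × Ω) :
    coordEquiv φ p = φ (unanimity p.1.1 p.1.2) p.2 := rfl

end Equiv

section Char
variable [Fintype Ω]

def act (g : Equiv.Perm Ω) (R : NE Ω) : NE Ω := ⟨R.1.image g, R.2.image g⟩

lemma act_act (g h : Equiv.Perm Ω) (R : NE Ω) : act g (act h R) = act (g * h) R := by
  apply Subtype.ext
  show (R.1.image h).image g = R.1.image ⇑(g * h)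
  rw [Finset.image_image]
  rfl

lemma act_one (R : NE Ω) : act 1 R = R := by
  apply Subtype.ext
  show R.1.image ⇑(1 : Equiv.Perm Ω) = R.1
  simp

lemma act_inv_act (g : Equiv.Perm Ω) (R : NE Ω) : act g⁻¹ (act g R) = R := by
  rw [act_act, inv_mul_cancel, act_one]

lemma act_act_inv (g : Equiv.Perm Ω) (R : NE Ω) : act g (act g⁻¹ R) = R := by
  rw [act_act, mul_inv_cancel, act_one]

def actEquiv (g : Equiv.Perm Ω) : NE Ω ≃ NE Ω where
  toFun := act g
  invFun := act g⁻¹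
  left_inv := act_inv_act g
  right_inv := act_act_inv g

lemma mem_image_inv (g : Equiv.Perm Ω) (S : Finset Ω) (x : Ω) :
    x ∈ S.image ⇑g⁻¹ ↔ g x ∈ S := by
  simp only [Finset.mem_image]
  constructor
  · rintro ⟨y, hy, rfl⟩; simpa using hy
  · intro h; exact ⟨g x, h, by simp⟩

lemma mem_act (g : Equiv.Perm Ω) (R : NE Ω) (x : Ω) :
    g x ∈ (act g R).1 ↔ x ∈ R.1 := by
  simp only [act, Finset.mem_image]
  constructor
  · rintro ⟨y, hy, hyx⟩; rwa [← g.injective hyx]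
  · intro h; exact ⟨x, h, rfl⟩

lemma permGame_unanimity (g : Equiv.Perm Ω) (R : NE Ω) :
    permGame g (unanimity R.1 R.2) = unanimity (act g R).1 (act g R).2 := by
  apply Subtype.ext
  funext S
  show (if R.1 ⊆ S.image ⇑g⁻¹ then (1:ℝ) else 0) = if R.1.image ⇑g ⊆ S then 1 else 0
  congr 1
  simp only [eq_iff_iff, Finset.image_subset_iff]
  constructor
  · intro h x hx
    exact (mem_image_inv g S x).1 (h hx)
  · intro h x hx
    exact (mem_image_inv g S x).2 (h x hx)

lemma coeffFn_permGame (g : Equiv.Perm Ω) (v : GameSpace Ω) (R : Finset Ω) :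
    coeffFn ((permGame g v : GameSpace Ω) : Finset Ω → ℝ) R
      = coeffFn (v : Finset Ω → ℝ) (R.image ⇑g⁻¹) := by
  unfold coeffFn
  refine Finset.sum_nbij' (fun S => S.image ⇑g⁻¹) (fun T => T.image ⇑g) ?_ ?_ ?_ ?_ ?_
  · intro S hS
    simp only [Finset.mem_powerset] at *
    exact Finset.image_subset_image hS
  · intro T hT
    simp only [Finset.mem_powerset] at *
    intro x hx
    obtain ⟨y, hy, rfl⟩ := Finset.mem_image.1 hx
    exact (mem_image_inv g R y).1 (hT hy)
  · intro S _
    show (S.image ⇑g⁻¹).image ⇑g = S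
    rw [Finset.image_image, show ⇑g ∘ ⇑g⁻¹ = id from funext fun x => perm_apply_inv_self g x,
      Finset.image_id]
  · intro T _
    show (T.image ⇑g).image ⇑g⁻¹ = T
    rw [Finset.image_image, show ⇑g⁻¹ ∘ ⇑g = id from funext fun x => perm_inv_apply_self g x,
      Finset.image_id]
  · intro S hS
    simp only [Finset.mem_powerset] at hS
    have h1 : (S.image ⇑g⁻¹).card = S.card := Finset.card_image_of_injective _ g⁻¹.injective
    have h2 : (R.image ⇑g⁻¹).card = R.card := Finset.card_image_of_injective _ g⁻¹.injective
    rw [h1, h2]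
    rfl

lemma coeffFn_null (i : Ω) (v : GameSpace Ω) (hnull : IsNullPlayer i v)
    (R : Finset Ω) (hiR : i ∈ R) : coeffFn (v : Finset Ω → ℝ) R = 0 := by
  have hR : R = insert i (R.erase i) := (Finset.insert_erase hiR).symm
  have hni : i ∉ R.erase i := Finset.notMem_erase i R
  unfold coeffFn
  rw [hR, Finset.sum_powerset_insert hni, ← Finset.sum_add_distrib, ← hR]
  refine Finset.sum_eq_zero fun S hS => ?_
  have hSsub : S ⊆ R.erase i := Finset.mem_powerset.1 hS
  have hiS : i ∉ S := fun h => hni (hSsub h)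
  have hcard : (insert i S).card = S.card + 1 := Finset.card_insert_of_notMem hiS
  have hSle : S.card + 1 ≤ R.card := by
    have h1 := Finset.card_le_card hSsub
    have h2 : (R.erase i).card = R.card - 1 := Finset.card_erase_of_mem hiR
    have h3 : 1 ≤ R.card := Finset.card_pos.2 ⟨i, hiR⟩
    omega
  rw [hcard, hnull S]
  have hpow : (-1 : ℝ) ^ (R.card - S.card) = -(-1 : ℝ) ^ (R.card - (S.card + 1)) := by
    rw [show R.card - S.card = (R.card - (S.card + 1)) + 1 by omega, pow_succ]
    ring
  rw [hpow]
  ring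

variable (G : Subgroup (Equiv.Perm Ω))

/-- The coordinate description of G-symmetric quasi-values. -/
def okP (a : XC Ω) : Prop :=
  (∀ p : NE Ω × Ω, p.2 ∉ p.1.1 → a p = 0) ∧
  (∀ R : NE Ω, ∑ i, a (R, i) = 1) ∧
  (∀ g ∈ G, ∀ (R : NE Ω) (i : Ω), a (act g R, g i) = a (R, i))

theorem char (φ : GameValue Ω) :
    (IsQuasiValue φ ∧ IsGSym G φ) ↔ okP G (coordEquiv φ) := by
  constructor
  · rintro ⟨⟨hnp, heff⟩, hsym⟩
    refine ⟨?_, ?_, ?_⟩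
    · rintro ⟨R, i⟩ hiR
      refine hnp _ i fun S => ?_
      show (if R.1 ⊆ insert i S then (1:ℝ) else 0) = if R.1 ⊆ S then 1 else 0
      congr 1
      simp only [eq_iff_iff]
      exact Finset.subset_insert_iff_of_notMem hiR
    · intro R
      have h2 : ∑ i, coordEquiv φ (R, i) = ∑ i, φ (unanimity R.1 R.2) i := rfl
      rw [h2, heff (unanimity R.1 R.2)]
      show (if R.1 ⊆ Finset.univ then (1:ℝ) else 0) = 1
      simp
    · intro g hg R i
      have h := hsym g hg (unanimity R.1 R.2) (g i)
      rw [permGame_unanimity] at h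
      show (coordEquiv φ) (act g R, g i) = (coordEquiv φ) (R, i)
      rw [coordEquiv_apply, coordEquiv_apply]
      simpa using h
  · rintro ⟨h0, h1, hsy⟩
    have ha : ∀ (R : NE Ω) (i : Ω), coordEquiv φ (R, i) = φ (unanimity R.1 R.2) i :=
      fun R i => rfl
    refine ⟨⟨?_, ?_⟩, ?_⟩
    · intro v i hnull
      rw [phi_eq φ v i]
      refine Finset.sum_eq_zero fun R _ => ?_
      by_cases hiR : i ∈ R.1
      · rw [coeffFn_null i v hnull R.1 hiR, zero_mul]
      · rw [← ha R i, h0 (R, i) hiR, mul_zero]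
    · intro v
      calc ∑ i, φ v i
          = ∑ i, ∑ R : NE Ω, coeffFn (v : Finset Ω → ℝ) R.1 * φ (unanimity R.1 R.2) i :=
            Finset.sum_congr rfl (fun i _ => phi_eq φ v i)
        _ = ∑ R : NE Ω, ∑ i, coeffFn (v : Finset Ω → ℝ) R.1 * φ (unanimity R.1 R.2) i :=
            Finset.sum_comm
        _ = ∑ R : NE Ω, coeffFn (v : Finset Ω → ℝ) R.1 := by
            refine Finset.sum_congr rfl fun R _ => ?_
            rw [← Finset.mul_sum, show (∑ i, φ (unanimity R.1 R.2) i) = 1 from h1 R, mul_one]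
        _ = ∑ R ∈ (Finset.univ : Finset Ω).powerset, coeffFn (v : Finset Ω → ℝ) R :=
            sum_nonempty_eq _ (by simp [coeffFn_empty]; exact v.2)
        _ = (v : Finset Ω → ℝ) Finset.univ := moebius _ _
    · intro g hg v i
      have key : ∀ R : NE Ω, coordEquiv φ (act g R, i) = coordEquiv φ (R, g⁻¹ i) := by
        intro R
        have h := hsy g hg R (g⁻¹ i)
        rwa [perm_apply_inv_self] at h
      rw [phi_eq φ (permGame g v) i, phi_eq φ v (g⁻¹ i)]
      have hL : ∀ R : NE Ω,
          coeffFn ((permGame g v : GameSpace Ω) : Finset Ω → ℝ) R.1 *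
            φ (unanimity R.1 R.2) i
          = coeffFn (v : Finset Ω → ℝ) ((act g⁻¹ R).1) * coordEquiv φ (R, i) := by
        intro R
        rw [coeffFn_permGame]
        rfl
      rw [Finset.sum_congr rfl (fun R _ => hL R)]
      conv_lhs => rw [← Equiv.sum_comp (actEquiv g)
        (fun R => coeffFn (v : Finset Ω → ℝ) ((act g⁻¹ R).1) * coordEquiv φ (R, i))]
      refine Finset.sum_congr rfl fun R _ => ?_
      rw [show (actEquiv g) R = act g R from rfl, act_inv_act, key R]
      rfl
end Char

section Affine
variable [Fintype Ω] (G : Subgroup (Equiv.Perm Ω))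

/-- The direction space in coordinates. -/
def V0 : Submodule ℝ (XC Ω) where
  carrier := {a | (∀ p : NE Ω × Ω, p.2 ∉ p.1.1 → a p = 0) ∧
    (∀ R : NE Ω, ∑ i, a (R, i) = 0) ∧
    (∀ g ∈ G, ∀ (R : NE Ω) (i : Ω), a (act g R, g i) = a (R, i))}
  add_mem' := by
    rintro a b ⟨ha0, ha1, has⟩ ⟨hb0, hb1, hbs⟩
    refine ⟨fun p hp => ?_, fun R => ?_, fun g hg R i => ?_⟩
    · show a p + b p = 0
      rw [ha0 p hp, hb0 p hp, add_zero]
    · show ∑ i, (a (R, i) + b (R, i)) = 0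
      rw [Finset.sum_add_distrib, ha1 R, hb1 R, add_zero]
    · show a (act g R, g i) + b (act g R, g i) = a (R, i) + b (R, i)
      rw [has g hg R i, hbs g hg R i]
  zero_mem' := ⟨fun _ _ => rfl, fun _ => Finset.sum_const_zero, fun _ _ _ _ => rfl⟩
  smul_mem' := by
    rintro c a ⟨ha0, ha1, has⟩
    refine ⟨fun p hp => ?_, fun R => ?_, fun g hg R i => ?_⟩
    · show c * a p = 0
      rw [ha0 p hp, mul_zero]
    · show ∑ i, c * a (R, i) = 0
      rw [← Finset.mul_sum, ha1 R, mul_zero]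
    · show c * a (act g R, g i) = c * a (R, i)
      rw [has g hg R i]

noncomputable def a0 : XC Ω := fun p => if p.2 ∈ p.1.1 then ((p.1.1.card : ℝ))⁻¹ else 0

lemma a0_ok : okP G (a0 : XC Ω) := by
  refine ⟨fun p hp => if_neg hp, fun R => ?_, fun g hg R i => ?_⟩
  · show ∑ i, (if i ∈ R.1 then ((R.1.card : ℝ))⁻¹ else 0) = 1
    rw [Finset.sum_ite_mem, Finset.univ_inter, Finset.sum_const, nsmul_eq_mul]
    have : (R.1.card : ℝ) ≠ 0 := by
      simp [Finset.card_ne_zero_of_mem (R.2.choose_spec)]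
    field_simp
  · show (if g i ∈ (act g R).1 then (((act g R).1.card : ℝ))⁻¹ else 0)
      = if i ∈ R.1 then ((R.1.card : ℝ))⁻¹ else 0
    have h1 : g i ∈ (act g R).1 ↔ i ∈ R.1 := mem_act g R i
    have h2 : (act g R).1.card = R.1.card := Finset.card_image_of_injective _ g.injective
    rw [h2]
    by_cases h : i ∈ R.1
    · rw [if_pos (h1.2 h), if_pos h]
    · rw [if_neg (fun hh => h (h1.1 hh)), if_neg h]

lemma okP_sub_mem {a b : XC Ω} (ha : okP G a) (hb : okP G b) : a - b ∈ V0 G := by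
  obtain ⟨ha0, ha1, has⟩ := ha
  obtain ⟨hb0, hb1, hbs⟩ := hb
  refine ⟨fun p hp => ?_, fun R => ?_, fun g hg R i => ?_⟩
  · show a p - b p = 0
    rw [ha0 p hp, hb0 p hp, sub_zero]
  · show ∑ i, (a (R, i) - b (R, i)) = 0
    rw [Finset.sum_sub_distrib, ha1 R, hb1 R, sub_self]
  · show a (act g R, g i) - b (act g R, g i) = a (R, i) - b (R, i)
    rw [has g hg R i, hbs g hg R i]

lemma okP_add_mem {w : XC Ω} (hw : w ∈ V0 G) : okP G (a0 + w) := by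
  obtain ⟨hw0, hw1, hws⟩ := hw
  obtain ⟨h0, h1, hs⟩ := a0_ok G
  refine ⟨fun p hp => ?_, fun R => ?_, fun g hg R i => ?_⟩
  · show a0 p + w p = 0
    rw [h0 p hp, hw0 p hp, add_zero]
  · show ∑ i, (a0 (R, i) + w (R, i)) = 1
    rw [Finset.sum_add_distrib, h1 R, hw1 R, add_zero]
  · show a0 (act g R, g i) + w (act g R, g i) = a0 (R, i) + w (R, i)
    rw [hs g hg R i, hws g hg R i]

lemma vectorSpan_okSet : vectorSpan ℝ {a : XC Ω | okP G a} = V0 G := by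
  apply le_antisymm
  · rw [vectorSpan_def, Submodule.span_le]
    rintro x hx
    obtain ⟨b, hb, c, hc, rfl⟩ := Set.mem_vsub.1 hx
    exact okP_sub_mem G hb hc
  · intro w hw
    rw [vectorSpan_def]
    apply Submodule.subset_span
    refine Set.mem_vsub.2 ⟨a0 + w, okP_add_mem G hw, a0, a0_ok G, ?_⟩
    rw [vsub_eq_sub, add_sub_cancel_left]

lemma finrank_direction_eq :
    Module.finrank ℝ
      (affineSpan ℝ {φ : GameValue Ω | IsQuasiValue φ ∧ IsGSym G φ}).direction
      = Module.finrank ℝ (V0 G) := by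
  rw [direction_affineSpan]
  have himg : (coordEquiv : GameValue Ω ≃ₗ[ℝ] XC Ω) '' {φ | IsQuasiValue φ ∧ IsGSym G φ}
      = {a : XC Ω | okP G a} := by
    ext a
    constructor
    · rintro ⟨φ, hφ, rfl⟩
      exact (char G φ).1 hφ
    · intro ha
      refine ⟨coordEquiv.symm a, (char G _).2 ?_, LinearEquiv.apply_symm_apply _ _⟩
      rwa [LinearEquiv.apply_symm_apply]
  have hmap : (vectorSpan ℝ {φ : GameValue Ω | IsQuasiValue φ ∧ IsGSym G φ}).map
      ((coordEquiv : GameValue Ω ≃ₗ[ℝ] XC Ω) : GameValue Ω →ₗ[ℝ] XC Ω) = vectorSpan ℝ {a : XC Ω | okP G a} := by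
    rw [← himg, vectorSpan_def, vectorSpan_def, Submodule.map_span]
    congr 1
    ext x
    constructor
    · rintro ⟨y, hy, rfl⟩
      obtain ⟨b, hb, c, hc, rfl⟩ := Set.mem_vsub.1 hy
      refine Set.mem_vsub.2 ⟨coordEquiv b, ⟨b, hb, rfl⟩, coordEquiv c, ⟨c, hc, rfl⟩, ?_⟩
      rw [vsub_eq_sub, vsub_eq_sub, ← map_sub]
      rfl
    · intro hx
      obtain ⟨b', ⟨b, hb, rfl⟩, c', ⟨c, hc, rfl⟩, rfl⟩ := Set.mem_vsub.1 hx
      refine ⟨b -ᵥ c, Set.mem_vsub.2 ⟨b, hb, c, hc, rfl⟩, ?_⟩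
      rw [vsub_eq_sub, vsub_eq_sub, map_sub]
      rfl
  rw [← vectorSpan_okSet G, ← hmap]
  exact (LinearEquiv.finrank_map_eq coordEquiv _).symm

end Affine

section Proj
variable [Fintype Ω]

/-- Blockwise projection onto "sum-zero" coordinates. -/
noncomputable def Pm : XC Ω →ₗ[ℝ] XC Ω where
  toFun a := fun p =>
    if p.2 ∈ p.1.1 then a p - ((p.1.1.card : ℝ))⁻¹ * ∑ j ∈ p.1.1, a (p.1, j) else 0
  map_add' a b := by
    funext p
    by_cases h : p.2 ∈ p.1.1
    · simp only [Pi.add_apply, if_pos h]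
      rw [Finset.sum_add_distrib]
      ring
    · simp only [Pi.add_apply, if_neg h, add_zero]
  map_smul' c a := by
    funext p
    by_cases h : p.2 ∈ p.1.1
    · simp only [Pi.smul_apply, RingHom.id_apply, smul_eq_mul, if_pos h]
      rw [← Finset.mul_sum]
      ring
    · simp only [Pi.smul_apply, RingHom.id_apply, smul_eq_mul, if_neg h, mul_zero]

lemma Pm_apply (a : XC Ω) (p : NE Ω × Ω) :
    Pm a p = if p.2 ∈ p.1.1 then a p - ((p.1.1.card : ℝ))⁻¹ * ∑ j ∈ p.1.1, a (p.1, j)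
      else 0 := rfl

/-- The permutation action on coordinates. -/
noncomputable def rho (g : Equiv.Perm Ω) : XC Ω →ₗ[ℝ] XC Ω where
  toFun a := fun p => a (act g⁻¹ p.1, g⁻¹ p.2)
  map_add' a b := rfl
  map_smul' c a := rfl

lemma rho_apply (g : Equiv.Perm Ω) (a : XC Ω) (p : NE Ω × Ω) :
    rho g a p = a (act g⁻¹ p.1, g⁻¹ p.2) := rfl

lemma Pm_apply' (a : XC Ω) (R : NE Ω) (i : Ω) :
    Pm a (R, i) = if i ∈ R.1 then a (R, i) - ((R.1.card : ℝ))⁻¹ * ∑ j ∈ R.1, a (R, j)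
      else 0 := rfl

lemma rho_apply' (g : Equiv.Perm Ω) (a : XC Ω) (R : NE Ω) (i : Ω) :
    rho g a (R, i) = a (act g⁻¹ R, g⁻¹ i) := rfl

lemma act_inv_fixed (g : Equiv.Perm Ω) (R : NE Ω) : act g⁻¹ R = R ↔ act g R = R := by
  constructor
  · intro h
    conv_lhs => rw [← h]
    exact act_act_inv g R
  · intro h
    conv_lhs => rw [← h]
    exact act_inv_act g R

lemma Pm_rho_comm (g : Equiv.Perm Ω) (a : XC Ω) : Pm (rho g a) = rho g (Pm a) := by
  funext p
  obtain ⟨R, i⟩ := p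
  rw [show rho g (Pm a) (R, i) = Pm a (act g⁻¹ R, g⁻¹ i) from rfl, Pm_apply', Pm_apply']
  rw [Finset.sum_congr rfl fun j _ => rho_apply' g a R j, rho_apply' g a R i]
  have hmem : g⁻¹ i ∈ (act g⁻¹ R).1 ↔ i ∈ R.1 := mem_act g⁻¹ R i
  have hcard : (act g⁻¹ R).1.card = R.1.card :=
    Finset.card_image_of_injective _ (g⁻¹ : Equiv.Perm Ω).injective
  have hsum : ∑ j ∈ R.1, a (act g⁻¹ R, g⁻¹ j) = ∑ j ∈ (act g⁻¹ R).1, a (act g⁻¹ R, j) := by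
    rw [show (act g⁻¹ R).1 = R.1.image ⇑g⁻¹ from rfl,
      Finset.sum_image (fun x _ y _ h => (g⁻¹ : Equiv.Perm Ω).injective h)]
  by_cases h : i ∈ R.1
  · rw [if_pos h, if_pos (hmem.2 h), hcard, hsum]
  · rw [if_neg h, if_neg (fun hh => h (hmem.1 hh))]

variable (G : Subgroup (Equiv.Perm Ω)) [Fintype G]

/-- The averaged projection whose range is `V0 G`. -/
noncomputable def piG : XC Ω →ₗ[ℝ] XC Ω :=
  (Nat.card G : ℝ)⁻¹ • ∑ g : G, Pm ∘ₗ rho (g : Equiv.Perm Ω)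

lemma piG_apply' (a : XC Ω) (p : NE Ω × Ω) :
    piG G a p = (Nat.card G : ℝ)⁻¹ * ∑ g : G, Pm (rho (g : Equiv.Perm Ω) a) p := by
  show ((Nat.card G : ℝ)⁻¹ • ∑ g : G, Pm ∘ₗ rho (g : Equiv.Perm Ω)) a p = _
  rw [LinearMap.smul_apply, LinearMap.sum_apply, Pi.smul_apply, Finset.sum_apply,
    smul_eq_mul]
  rfl

lemma Pm_sum_zero (a : XC Ω) (R : NE Ω) : ∑ i, Pm a (R, i) = 0 := by
  rw [Finset.sum_congr rfl fun i _ => Pm_apply' a R i]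
  rw [Finset.sum_ite_mem, Finset.univ_inter, Finset.sum_sub_distrib, Finset.sum_const,
    nsmul_eq_mul]
  have hcard : (R.1.card : ℝ) ≠ 0 := by
    have := Finset.card_pos.2 R.2
    positivity
  field_simp
  ring

lemma Pm_mem_P0 (a : XC Ω) (p : NE Ω × Ω) (hp : p.2 ∉ p.1.1) : Pm a p = 0 := if_neg hp

lemma rho_mem_G_fixes {a : XC Ω} (ha : a ∈ V0 G) {g : Equiv.Perm Ω} (hg : g ∈ G) :
    rho g a = a := by
  funext p
  rw [rho_apply]
  have h := ha.2.2 g⁻¹ (inv_mem hg) p.1 p.2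
  simpa using h

lemma Pm_fix {a : XC Ω} (h0 : ∀ p : NE Ω × Ω, p.2 ∉ p.1.1 → a p = 0)
    (h1 : ∀ R : NE Ω, ∑ i : Ω, a (R, i) = 0) : Pm a = a := by
  funext p
  obtain ⟨R, i⟩ := p
  rw [Pm_apply']
  by_cases h : i ∈ R.1
  · rw [if_pos h]
    have hs : ∑ j ∈ R.1, a (R, j) = ∑ j, a (R, j) :=
      Finset.sum_subset (Finset.subset_univ _) (fun x _ hx => h0 (R, x) hx)
    rw [hs, h1 R, mul_zero, sub_zero]
  · rw [if_neg h]
    exact (h0 (R, i) h).symm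

lemma piG_mem (a : XC Ω) : piG G a ∈ V0 G := by
  refine ⟨fun p hp => ?_, fun R => ?_, fun g hg R i => ?_⟩
  · rw [piG_apply', Finset.sum_congr rfl fun g _ => Pm_mem_P0 _ p hp]
    simp
  · rw [Finset.sum_congr rfl fun i _ => piG_apply' G a (R, i), ← Finset.mul_sum]
    have h : ∑ i, ∑ g : G, Pm (rho (g : Equiv.Perm Ω) a) (R, i) = 0 := by
      rw [Finset.sum_comm]
      exact Finset.sum_eq_zero fun g _ => Pm_sum_zero _ R
    rw [h, mul_zero]
  · rw [piG_apply', piG_apply']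
    congr 1
    refine Fintype.sum_equiv (Equiv.mulLeft (⟨g, hg⟩ : G)⁻¹) _ _ fun h => ?_
    rw [Pm_rho_comm, Pm_rho_comm, rho_apply, rho_apply]
    simp only [Equiv.coe_mulLeft, Subgroup.coe_mul, InvMemClass.coe_inv, mul_inv_rev,
      inv_inv, act_act]
    rfl

lemma piG_fix {a : XC Ω} (ha : a ∈ V0 G) : piG G a = a := by
  funext p
  rw [piG_apply']
  have h : ∀ g : G, Pm (rho (g : Equiv.Perm Ω) a) p = a p := fun g => by
    rw [rho_mem_G_fixes G ha g.2, Pm_fix ha.1 ha.2.1]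
  rw [Finset.sum_congr rfl fun g _ => h g, Finset.sum_const, nsmul_eq_mul, ← mul_assoc]
  have hG : ((Finset.univ : Finset G).card : ℝ) = (Nat.card G : ℝ) := by
    rw [Finset.card_univ, Nat.card_eq_fintype_card]
  rw [hG]
  have hne : (Nat.card G : ℝ) ≠ 0 := by
    have : 0 < Nat.card G := Nat.card_pos
    positivity
  field_simp

lemma piG_isProj : LinearMap.IsProj (V0 G) (piG G) :=
  ⟨piG_mem G, fun x hx => piG_fix G hx⟩

lemma finrank_V0_eq_trace :
    (Module.finrank ℝ (V0 G) : ℝ) = LinearMap.trace ℝ (XC Ω) (piG G) :=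
  ((piG_isProj G).trace).symm

lemma trace_piG : LinearMap.trace ℝ (XC Ω) (piG G)
    = (Nat.card G : ℝ)⁻¹ *
        ∑ g : G, LinearMap.trace ℝ (XC Ω) (Pm ∘ₗ rho (g : Equiv.Perm Ω)) := by
  rw [show piG G = (Nat.card G : ℝ)⁻¹ • ∑ g : G, Pm ∘ₗ rho (g : Equiv.Perm Ω) from rfl]
  rw [map_smul, map_sum, smul_eq_mul]

lemma trace_Pm_rho (g : Equiv.Perm Ω) :
    LinearMap.trace ℝ (XC Ω) (Pm ∘ₗ rho g)
      = ((Finset.univ.filter fun q : NE Ω × Ω =>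
            q.2 ∈ q.1.1 ∧ act g q.1 = q.1 ∧ g q.2 = q.2).card : ℝ)
        - ((Finset.univ.filter fun R : NE Ω => act g R = R).card : ℝ) := by
  classical
  rw [LinearMap.trace_eq_matrix_trace ℝ (Pi.basisFun ℝ (NE Ω × Ω)), Matrix.trace]
  have hdiag : ∀ q : NE Ω × Ω,
      (LinearMap.toMatrix (Pi.basisFun ℝ (NE Ω × Ω)) (Pi.basisFun ℝ (NE Ω × Ω))
        (Pm ∘ₗ rho g)).diag q
      = (if q.2 ∈ q.1.1 ∧ act g q.1 = q.1 ∧ g q.2 = q.2 then (1 : ℝ) else 0)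
        - (if q.2 ∈ q.1.1 ∧ act g q.1 = q.1 then ((q.1.1.card : ℝ))⁻¹ else 0) := by
    rintro ⟨R, i⟩
    rw [Matrix.diag, LinearMap.toMatrix_apply, Pi.basisFun_repr, LinearMap.comp_apply,
      Pi.basisFun_apply, Pm_apply']
    by_cases hmem : i ∈ R.1
    · rw [if_pos hmem]
      by_cases hinv : act g R = R
      · have hinv' : act g⁻¹ R = R := (act_inv_fixed g R).2 hinv
        have hb : ∀ j : Ω, rho g (Pi.single (R, i) (1:ℝ)) (R, j)
            = if j = g i then (1:ℝ) else 0 := by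
          intro j
          rw [rho_apply', Pi.single_apply, hinv']
          simp only [Prod.mk.injEq, true_and, Equiv.Perm.inv_eq_iff_eq]
        have hgiR : g i ∈ R.1 := by
          have h := (mem_act g R i).2 hmem
          rwa [hinv] at h
        have hsum : ∑ j ∈ R.1, rho g (Pi.single (R, i) (1:ℝ)) (R, j) = 1 := by
          rw [Finset.sum_congr rfl fun j _ => hb j,
            Finset.sum_ite_eq' R.1 (g i) (fun _ => (1:ℝ)), if_pos hgiR]
        rw [hb i, hsum, mul_one]
        by_cases hfix : g i = i
        · rw [if_pos (show i = g i from hfix.symm),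
            if_pos (show _ ∧ _ ∧ _ from ⟨hmem, hinv, hfix⟩),
            if_pos (show _ ∧ _ from ⟨hmem, hinv⟩)]
        · rw [if_neg (show ¬ i = g i from fun hh => hfix hh.symm),
            if_neg (show ¬(_ ∧ _ ∧ _) from fun hh => hfix hh.2.2),
            if_pos (show _ ∧ _ from ⟨hmem, hinv⟩)]
      · have hinv' : ¬ act g⁻¹ R = R := fun hh => hinv ((act_inv_fixed g R).1 hh)
        have hb : ∀ j : Ω, rho g (Pi.single (R, i) (1:ℝ)) (R, j) = 0 := by
          intro j
          rw [rho_apply', Pi.single_apply, if_neg]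
          intro hh
          exact hinv' (congrArg Prod.fst hh)
        rw [hb i, Finset.sum_congr rfl fun j _ => hb j, Finset.sum_const_zero, mul_zero,
          sub_zero, if_neg (fun hh => hinv hh.2.1), if_neg (fun hh => hinv hh.2),
          sub_zero]
    · rw [if_neg hmem, if_neg (fun hh : _ ∧ _ => hmem hh.1),
        if_neg (fun hh : _ ∧ _ => hmem hh.1), sub_zero]
  rw [Finset.sum_congr rfl fun q _ => hdiag q, Finset.sum_sub_distrib]
  congr 1
  · rw [Finset.sum_boole]
  · rw [Fintype.sum_prod_type]
    have hR : ∀ R : NE Ω,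
        (∑ i : Ω, if i ∈ R.1 ∧ act g R = R then ((R.1.card : ℝ))⁻¹ else 0)
        = if act g R = R then 1 else 0 := by
      intro R
      by_cases hinv : act g R = R
      · rw [if_pos hinv]
        have h2 : ∀ i : Ω, (if i ∈ R.1 ∧ act g R = R then ((R.1.card : ℝ))⁻¹ else 0)
            = if i ∈ R.1 then ((R.1.card : ℝ))⁻¹ else 0 := by
          intro i
          by_cases h : i ∈ R.1
          · rw [if_pos ⟨h, hinv⟩, if_pos h]
          · rw [if_neg (fun hh : _ ∧ _ => h hh.1), if_neg h]
        rw [Finset.sum_congr rfl fun i _ => h2 i, Finset.sum_ite_mem, Finset.univ_inter,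
          Finset.sum_const, nsmul_eq_mul]
        have hcard : (R.1.card : ℝ) ≠ 0 := by
          have := Finset.card_pos.2 R.2
          positivity
        field_simp
      · rw [if_neg hinv, Finset.sum_eq_zero fun i _ => if_neg (fun hh : _ ∧ _ => hinv hh.2)]
    rw [Finset.sum_congr rfl fun R _ => hR R, Finset.sum_boole]

end Proj

section Count
variable [Fintype Ω] (g : Equiv.Perm Ω)

/-- The same-cycle setoid of a permutation. -/
def scSetoid : Setoid Ω where
  r := g.SameCycle
  iseqv := ⟨fun x => Equiv.Perm.SameCycle.refl g x, Equiv.Perm.SameCycle.symm,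
    Equiv.Perm.SameCycle.trans⟩

noncomputable instance : Fintype (Quotient (scSetoid g)) :=
  @Quotient.fintype Ω _ (scSetoid g) (Classical.decRel _)

lemma invariant_mem_iff {R : Finset Ω} (hR : R.image ⇑g = R) (x : Ω) :
    x ∈ R ↔ g x ∈ R := by
  constructor
  · intro h
    rw [← hR]
    exact Finset.mem_image_of_mem _ h
  · intro h
    rw [← hR] at h
    obtain ⟨y, hy, hyx⟩ := Finset.mem_image.1 h
    rwa [← g.injective hyx]

lemma invariant_zpow {R : Finset Ω} (hR : R.image ⇑g = R) (n : ℤ) (x : Ω)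
    (hx : x ∈ R) : (g ^ n) x ∈ R := by
  have hnat : ∀ (m : ℕ) (y : Ω), y ∈ R ↔ (g ^ m) y ∈ R := by
    intro m
    induction m with
    | zero => intro y; simp
    | succ k ih =>
      intro y
      rw [pow_succ, Equiv.Perm.mul_apply]
      exact (invariant_mem_iff g hR y).trans (ih (g y))
  cases n with
  | ofNat m =>
    rw [Int.ofNat_eq_coe, zpow_natCast]
    exact (hnat m x).1 hx
  | negSucc m =>
    rw [zpow_negSucc]
    refine (hnat (m + 1) ((g ^ (m + 1))⁻¹ x)).2 ?_
    rw [perm_apply_inv_self]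
    exact hx

lemma sameCycle_mem {R : Finset Ω} (hR : R.image ⇑g = R) {x y : Ω} (hx : x ∈ R)
    (h : g.SameCycle x y) : y ∈ R := by
  obtain ⟨n, rfl⟩ := h
  exact invariant_zpow g hR n x hx

lemma mem_image_mk_iff [DecidableEq (Quotient (scSetoid g))] {R : Finset Ω} (hR : R.image ⇑g = R) (x : Ω) :
    Quotient.mk (scSetoid g) x ∈ R.image (Quotient.mk (scSetoid g)) ↔ x ∈ R := by
  constructor
  · intro h
    obtain ⟨y, hy, hyx⟩ := Finset.mem_image.1 h
    exact sameCycle_mem g hR hy (Quotient.eq.1 hyx)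
  · exact fun h => Finset.mem_image_of_mem _ h

/-- counting all finsets containing a fixed element -/
lemma card_finsets_containing {α : Type*} [Fintype α] [DecidableEq α] (q : α) :
    (Finset.univ.filter fun T : Finset α => q ∈ T).card = 2 ^ (Fintype.card α - 1) := by
  rw [show (Finset.univ.filter fun T : Finset α => q ∈ T).card
      = ((Finset.univ.erase q).powerset).card from ?_]
  · rw [Finset.card_powerset, Finset.card_erase_of_mem (Finset.mem_univ q),
      Finset.card_univ]
  · refine Finset.card_bij' (fun T _ => T.erase q) (fun S _ => insert q S) ?_ ?_ ?_ ?_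
    · intro T hT
      rw [Finset.mem_powerset]
      exact Finset.erase_subset_erase q (Finset.subset_univ T)
    · intro S hS
      simp only [Finset.mem_filter, Finset.mem_univ, true_and]
      exact Finset.mem_insert_self q S
    · intro T hT
      simp only [Finset.mem_filter, Finset.mem_univ, true_and] at hT
      exact Finset.insert_erase hT
    · intro S hS
      rw [Finset.mem_powerset] at hS
      exact Finset.erase_insert (fun hq => (Finset.mem_erase.1 (hS hq)).1 rfl)

lemma card_nonempty_finsets {α : Type*} [Fintype α] :
    (Finset.univ.filter fun T : Finset α => T.Nonempty).card = 2 ^ (Fintype.card α) - 1 := by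
  classical
  have h := Finset.card_filter_add_card_filter_not (s := (Finset.univ : Finset (Finset α)))
    (p := fun T : Finset α => T.Nonempty)
  have h2 : Finset.univ.filter (fun T : Finset α => ¬ T.Nonempty) = {∅} := by
    ext T
    simp [Finset.not_nonempty_iff_eq_empty]
  rw [h2] at h
  have h3 : (Finset.univ : Finset (Finset α)).card = 2 ^ Fintype.card α := by
    rw [Finset.card_univ, Fintype.card_finset]
  simp only [Finset.card_singleton] at h
  omega

/-- The invariant nonempty coalitions are in bijection with nonempty sets of cycles. -/
lemma card_invariant_NE [DecidableEq (Quotient (scSetoid g))] :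
    (Finset.univ.filter fun R : NE Ω => act g R = R).card
      = (Finset.univ.filter fun T : Finset (Quotient (scSetoid g)) => T.Nonempty).card := by
  classical
  refine Finset.card_bij (fun R _ => R.1.image (Quotient.mk (scSetoid g))) ?_ ?_ ?_
  · intro R hR
    simp only [Finset.mem_filter, Finset.mem_univ, true_and]
    exact R.2.image _
  · intro R hR S hS h
    simp only [Finset.mem_filter, Finset.mem_univ, true_and] at hR hS
    have hR' : R.1.image ⇑g = R.1 := congrArg Subtype.val hR
    have hS' : S.1.image ⇑g = S.1 := congrArg Subtype.val hS
    have h' : R.1.image (Quotient.mk (scSetoid g)) = S.1.image (Quotient.mk (scSetoid g)) := h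
    refine Subtype.ext (Finset.ext fun x => ?_)
    rw [← mem_image_mk_iff g hR', ← mem_image_mk_iff g hS', h']
  · intro T hT
    simp only [Finset.mem_filter, Finset.mem_univ, true_and] at hT
    obtain ⟨q, hq⟩ := hT
    obtain ⟨x₀, hx₀⟩ := Quotient.exists_rep q
    have hmm : ∀ y : Ω, Quotient.mk (scSetoid g) (g y) = Quotient.mk (scSetoid g) y :=
      fun y => Quotient.sound ⟨-1, by simp⟩
    set R₀ : Finset Ω := Finset.univ.filter (fun x => Quotient.mk (scSetoid g) x ∈ T) with hR₀
    have hne : R₀.Nonempty := ⟨x₀, by simp [hR₀, hx₀, hq]⟩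
    have hinv : R₀.image ⇑g = R₀ := by
      ext y
      simp only [hR₀, Finset.mem_image, Finset.mem_filter, Finset.mem_univ, true_and]
      constructor
      · rintro ⟨x, hx, rfl⟩
        rwa [hmm x]
      · intro hy
        refine ⟨g⁻¹ y, ?_, perm_apply_inv_self g y⟩
        have := hmm (g⁻¹ y)
        rw [perm_apply_inv_self] at this
        rwa [← this]
    refine ⟨⟨R₀, hne⟩, ?_, ?_⟩
    · simp only [Finset.mem_filter, Finset.mem_univ, true_and]
      exact Subtype.ext hinv
    · ext p
      simp only [Finset.mem_image]
      constructor
      · rintro ⟨x, hx, rfl⟩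
        simp only [hR₀, Finset.mem_filter] at hx
        exact hx.2
      · intro hp
        obtain ⟨x, hx⟩ := Quotient.exists_rep p
        exact ⟨x, by simp [hR₀, hx, hp], hx⟩

lemma card_invariant_NE_containing [DecidableEq (Quotient (scSetoid g))] (i : Ω) :
    (Finset.univ.filter fun R : NE Ω => i ∈ R.1 ∧ act g R = R).card
      = (Finset.univ.filter fun T : Finset (Quotient (scSetoid g)) =>
          Quotient.mk (scSetoid g) i ∈ T).card := by
  classical
  refine Finset.card_bij (fun R _ => R.1.image (Quotient.mk (scSetoid g))) ?_ ?_ ?_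
  · intro R hR
    simp only [Finset.mem_filter, Finset.mem_univ, true_and] at hR ⊢
    exact Finset.mem_image_of_mem _ hR.1
  · intro R hR S hS h
    simp only [Finset.mem_filter, Finset.mem_univ, true_and] at hR hS
    have hR' : R.1.image ⇑g = R.1 := congrArg Subtype.val hR.2
    have hS' : S.1.image ⇑g = S.1 := congrArg Subtype.val hS.2
    have h' : R.1.image (Quotient.mk (scSetoid g)) = S.1.image (Quotient.mk (scSetoid g)) := h
    refine Subtype.ext (Finset.ext fun x => ?_)
    rw [← mem_image_mk_iff g hR', ← mem_image_mk_iff g hS', h']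
  · intro T hT
    simp only [Finset.mem_filter, Finset.mem_univ, true_and] at hT
    have hmm : ∀ y : Ω, Quotient.mk (scSetoid g) (g y) = Quotient.mk (scSetoid g) y :=
      fun y => Quotient.sound ⟨-1, by simp⟩
    set R₀ : Finset Ω := Finset.univ.filter (fun x => Quotient.mk (scSetoid g) x ∈ T) with hR₀
    have hiR : i ∈ R₀ := by simp [hR₀, hT]
    have hne : R₀.Nonempty := ⟨i, hiR⟩
    have hinv : R₀.image ⇑g = R₀ := by
      ext y
      simp only [hR₀, Finset.mem_image, Finset.mem_filter, Finset.mem_univ, true_and]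
      constructor
      · rintro ⟨x, hx, rfl⟩
        rwa [hmm x]
      · intro hy
        refine ⟨g⁻¹ y, ?_, perm_apply_inv_self g y⟩
        have := hmm (g⁻¹ y)
        rw [perm_apply_inv_self] at this
        rwa [← this]
    refine ⟨⟨R₀, hne⟩, ?_, ?_⟩
    · simp only [Finset.mem_filter, Finset.mem_univ, true_and]
      exact ⟨hiR, Subtype.ext hinv⟩
    · ext p
      simp only [Finset.mem_image]
      constructor
      · rintro ⟨x, hx, rfl⟩
        simp only [hR₀, Finset.mem_filter] at hx
        exact hx.2
      · intro hp
        obtain ⟨x, hx⟩ := Quotient.exists_rep p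
        exact ⟨x, by simp [hR₀, hx, hp], hx⟩

end Count

section CardQ
variable [Fintype Ω] (g : Equiv.Perm Ω)

noncomputable def choosePt (c : Equiv.Perm Ω) (hc : c ∈ g.cycleFactorsFinset) : Ω :=
  ((Equiv.Perm.mem_cycleFactorsFinset_iff.1 hc).1.nonempty_support).choose

lemma choosePt_mem (c : Equiv.Perm Ω) (hc : c ∈ g.cycleFactorsFinset) :
    choosePt g c hc ∈ c.support :=
  ((Equiv.Perm.mem_cycleFactorsFinset_iff.1 hc).1.nonempty_support).choose_spec

noncomputable def qInv :
    ({x : Ω // g x = x} ⊕ {c : Equiv.Perm Ω // c ∈ g.cycleFactorsFinset}) →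
      Quotient (scSetoid g)
  | Sum.inl x => Quotient.mk (scSetoid g) x.1
  | Sum.inr c => Quotient.mk (scSetoid g) (choosePt g c.1 c.2)

noncomputable def qEquiv : Quotient (scSetoid g) ≃
    ({x : Ω // g x = x} ⊕ {c : Equiv.Perm Ω // c ∈ g.cycleFactorsFinset}) := by
  classical
  refine
    { toFun := Quotient.lift (fun x : Ω =>
        if h : g x = x then Sum.inl ⟨x, h⟩ else
          Sum.inr ⟨g.cycleOf x, Equiv.Perm.cycleOf_mem_cycleFactorsFinset_iff.2
            (Equiv.Perm.mem_support.2 h)⟩) ?_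
      invFun := qInv g
      left_inv := ?_
      right_inv := ?_ }
  · intro a b hab
    have hab' : g.SameCycle a b := hab
    by_cases ha : g a = a
    · have hba : b = a := by
        obtain ⟨n, hn⟩ := hab'
        rw [← hn, Equiv.Perm.zpow_apply_eq_self_of_apply_eq_self ha]
      subst hba
      rfl
    · by_cases hb : g b = b
      · exfalso
        obtain ⟨n, hn⟩ := hab'.symm
        rw [← hn, Equiv.Perm.zpow_apply_eq_self_of_apply_eq_self hb] at ha
        exact ha hb
      · simp only [dif_neg ha, dif_neg hb]
        congr 1
        exact Subtype.ext (Equiv.Perm.SameCycle.cycleOf_eq hab')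
  · refine fun q => Quotient.inductionOn q (fun x => ?_)
    by_cases h : g x = x
    · simp only [Quotient.lift_mk, dif_pos h]
      rfl
    · simp only [Quotient.lift_mk, dif_neg h]
      apply Quotient.sound
      have hmem := choosePt_mem g (g.cycleOf x)
        (Equiv.Perm.cycleOf_mem_cycleFactorsFinset_iff.2 (Equiv.Perm.mem_support.2 h))
      have h2 := (Equiv.Perm.mem_support_cycleOf_iff.1 hmem).1
      exact h2.symm
  · rintro (⟨x, hx⟩ | ⟨c, hc⟩)
    · show Quotient.lift _ _ (Quotient.mk (scSetoid g) x) = _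
      simp only [Quotient.lift_mk, dif_pos hx]
    · show Quotient.lift _ _ (Quotient.mk (scSetoid g) (choosePt g c hc)) = _
      simp only [Quotient.lift_mk]
      have hpt := choosePt_mem g c hc
      have hgc : g (choosePt g c hc) = c (choosePt g c hc) :=
        ((Equiv.Perm.mem_cycleFactorsFinset_iff.1 hc).2 _ hpt).symm
      have hne : g (choosePt g c hc) ≠ choosePt g c hc := by
        rw [hgc]
        exact Equiv.Perm.mem_support.1 hpt
      rw [dif_neg (show ¬ g (choosePt g c hc) = choosePt g c hc from hne)]
      congr 1
      exact Subtype.ext (Equiv.Perm.cycle_is_cycleOf hpt hc).symm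

lemma card_Q : Fintype.card (Quotient (scSetoid g)) = numCycles g := by
  classical
  rw [Fintype.card_congr (qEquiv g), Fintype.card_sum]
  have h1 : Fintype.card {x : Ω // g x = x} = numFixed g := by
    rw [Fintype.card_subtype]
    rfl
  have h2 : Fintype.card {c : Equiv.Perm Ω // c ∈ g.cycleFactorsFinset}
      = g.cycleFactorsFinset.card := Fintype.card_coe _
  have h3 : Multiset.card g.cycleType = g.cycleFactorsFinset.card := by
    rw [Equiv.Perm.cycleType_def, Multiset.card_map]
    rfl
  rw [h1, h2, numCycles, h3, Nat.add_comm]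

lemma count_invariant :
    (Finset.univ.filter fun R : NE Ω => act g R = R).card = 2 ^ (numCycles g) - 1 := by
  classical
  rw [card_invariant_NE g, card_nonempty_finsets, card_Q g]

lemma count_pairs :
    (Finset.univ.filter fun q : NE Ω × Ω =>
        q.2 ∈ q.1.1 ∧ act g q.1 = q.1 ∧ g q.2 = q.2).card
      = numFixed g * 2 ^ (numCycles g - 1) := by
  classical
  rw [Finset.card_eq_sum_card_fiberwise
    (f := Prod.snd) (t := Finset.univ) (fun x _ => Finset.mem_univ _)]
  have hfiber : ∀ i : Ω,
      ((Finset.univ.filter fun q : NE Ω × Ω =>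
          q.2 ∈ q.1.1 ∧ act g q.1 = q.1 ∧ g q.2 = q.2).filter fun q => q.2 = i).card
      = if g i = i then
          (Finset.univ.filter fun R : NE Ω => i ∈ R.1 ∧ act g R = R).card else 0 := by
    intro i
    by_cases hfix : g i = i
    · rw [if_pos hfix]
      refine Finset.card_bij (fun q _ => q.1) ?_ ?_ ?_
      · intro q hq
        simp only [Finset.mem_filter, Finset.mem_univ, true_and] at hq ⊢
        obtain ⟨⟨h1, h2, _⟩, h4⟩ := hq
        exact ⟨h4 ▸ h1, h2⟩
      · intro q hq r hr h
        simp only [Finset.mem_filter, Finset.mem_univ, true_and] at hq hr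
        have h1 : q.1 = r.1 := h
        have h2 : q.2 = r.2 := by rw [hq.2, hr.2]
        exact Prod.ext h1 h2
      · intro R hR
        simp only [Finset.mem_filter, Finset.mem_univ, true_and] at hR
        exact ⟨(R, i), Finset.mem_filter.2 ⟨Finset.mem_filter.2
          ⟨Finset.mem_univ _, hR.1, hR.2, hfix⟩, rfl⟩, rfl⟩
    · rw [if_neg hfix]
      rw [Finset.card_eq_zero]
      refine Finset.filter_eq_empty_iff.2 ?_
      intro q hq
      simp only [Finset.mem_filter, Finset.mem_univ, true_and] at hq
      intro hqi
      exact hfix (hqi ▸ hq.2.2)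
  rw [Finset.sum_congr rfl fun i _ => hfiber i]
  have hcount : ∀ i : Ω,
      (Finset.univ.filter fun R : NE Ω => i ∈ R.1 ∧ act g R = R).card
        = 2 ^ (numCycles g - 1) := by
    intro i
    rw [card_invariant_NE_containing g i, card_finsets_containing, card_Q g]
  have hstep : ∀ i : Ω,
      (if g i = i then
        (Finset.univ.filter fun R : NE Ω => i ∈ R.1 ∧ act g R = R).card else 0)
      = if g i = i then 2 ^ (numCycles g - 1) else 0 := by
    intro i
    by_cases h : g i = i
    · rw [if_pos h, if_pos h, hcount i]
    · rw [if_neg h, if_neg h]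
  rw [Finset.sum_congr rfl fun i _ => hstep i, ← Finset.sum_filter, Finset.sum_const,
    smul_eq_mul]
  rfl

lemma trace_formula :
    LinearMap.trace ℝ (XC Ω) (Pm ∘ₗ rho g)
      = (numFixed g : ℝ) * 2 ^ (numCycles g - 1) - (2 ^ (numCycles g) - 1) := by
  rw [trace_Pm_rho, count_pairs, count_invariant]
  have h1 : (1 : ℕ) ≤ 2 ^ (numCycles g) := Nat.one_le_two_pow
  rw [Nat.cast_sub h1]
  push_cast
  ring

end CardQ

end Stmt3Aux

/-- the explicit dimension formula
`dim 𝒜_G = (1/|G|)·(∑_{π∈G} fix(π)·2^{c(π)-1} - ∑_{π∈G} 2^{c(π)}) + 1`,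
which is the evaluation `(∂Z_G/∂x₁ - Z_G)|_{(2,…,2)} + 1` of the cycle index. -/
theorem stmt3 {Ω : Type*} [Fintype Ω] [DecidableEq Ω] (G : Subgroup (Equiv.Perm Ω))
    [Fintype G] :
    (Module.finrank ℝ
        (affineSpan ℝ {φ : GameValue Ω | IsQuasiValue φ ∧ IsGSym G φ}).direction : ℝ) =
      (1 / (Nat.card G : ℝ)) *
        ((∑ g : G, (numFixed (g : Equiv.Perm Ω) : ℝ) *
            2 ^ (numCycles (g : Equiv.Perm Ω) - 1)) -
          ∑ g : G, (2 : ℝ) ^ numCycles (g : Equiv.Perm Ω)) + 1 := by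
  classical
  rw [Stmt3Aux.finrank_direction_eq G, Stmt3Aux.finrank_V0_eq_trace G, Stmt3Aux.trace_piG G]
  have hterm : ∑ g : G,
      LinearMap.trace ℝ (Stmt3Aux.XC Ω) (Stmt3Aux.Pm ∘ₗ Stmt3Aux.rho (g : Equiv.Perm Ω))
      = ∑ g : G,
        ((numFixed (g : Equiv.Perm Ω) : ℝ) * 2 ^ (numCycles (g : Equiv.Perm Ω) - 1)
          - (2 ^ numCycles (g : Equiv.Perm Ω) - 1)) :=
    Finset.sum_congr rfl fun g _ => Stmt3Aux.trace_formula (g : Equiv.Perm Ω)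
  rw [hterm]
  have hcard : (Nat.card G : ℝ) ≠ 0 := by
    have : 0 < Nat.card G := Nat.card_pos
    positivity
  have hsplit : ∑ g : G,
      ((numFixed (g : Equiv.Perm Ω) : ℝ) * 2 ^ (numCycles (g : Equiv.Perm Ω) - 1)
        - (2 ^ numCycles (g : Equiv.Perm Ω) - 1))
      = (∑ g : G, (numFixed (g : Equiv.Perm Ω) : ℝ) *
            2 ^ (numCycles (g : Equiv.Perm Ω) - 1))
        - ((∑ g : G, (2 : ℝ) ^ numCycles (g : Equiv.Perm Ω)) - (Nat.card G : ℝ)) := by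
    rw [Finset.sum_sub_distrib, Finset.sum_sub_distrib, Finset.sum_const, nsmul_eq_mul,
      mul_one, Finset.card_univ, Nat.card_eq_fintype_card]
  rw [hsplit, one_div]
  field_simp
  ring
end

section
/- Let Ω be a finite set of players and G ≤ S_Ω a group acting supertransitively on Ω. Then every G-symmetric quasi-value φ on Ω satisfies, on each unanimity game u_R with ∅ ≠ R ⊆ Ω, φ_i(u_R) = 1/|R| for all i ∈ R and φ_i(u_R) = 0 for i ∉ R; hence φ is the Shapley value. -/
open scoped BigOperators

/-- The Shapley value. -/
noncomputable def shapley (Ω : Type*) [Fintype Ω] [DecidableEq Ω] : GameValue Ω where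
  toFun v i := ∑ R ∈ (Finset.univ.erase i).powerset,
      ((R.card.factorial * (Fintype.card Ω - R.card - 1).factorial : ℝ) /
        (Fintype.card Ω).factorial) *
        ((v : Finset Ω → ℝ) (insert i R) - (v : Finset Ω → ℝ) R)
  map_add' a b := by
    funext i
    simp only [Submodule.coe_add, Pi.add_apply]
    rw [← Finset.sum_add_distrib]
    exact Finset.sum_congr rfl fun R _ => by ring
  map_smul' c a := by
    funext i
    simp only [Submodule.coe_smul, Pi.smul_apply, RingHom.id_apply, smul_eq_mul]
    rw [Finset.mul_sum]
    exact Finset.sum_congr rfl fun R _ => by ring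

/-- A permutation group `G` acts supertransitively if for every subset `A`, the
setwise stabilizer `G_A = {g ∈ G : g(A) = A}` acts transitively on `A`. -/
def Supertransitive {Ω : Type*} [DecidableEq Ω] (G : Subgroup (Equiv.Perm Ω)) : Prop :=
  ∀ A : Finset Ω, ∀ i ∈ A, ∀ j ∈ A, ∃ g ∈ G, A.image g = A ∧ g i = j

section Aux
set_option linter.unusedSectionVars false
variable {Ω : Type*} [Fintype Ω] [DecidableEq Ω]

lemma unanimity_coe (R : Finset Ω) (hR : R.Nonempty) (S : Finset Ω) :
    (unanimity R hR : Finset Ω → ℝ) S = if R ⊆ S then 1 else 0 := rfl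

lemma image_inv_eq {g : Equiv.Perm Ω} {S : Finset Ω} :
    (S.image (g⁻¹ : Equiv.Perm Ω)).image g = S := by
  ext x
  simp only [Finset.mem_image]
  constructor
  · rintro ⟨y, ⟨z, hz, rfl⟩, rfl⟩; simpa using hz
  · intro hx; exact ⟨g⁻¹ x, ⟨x, hx, rfl⟩, by simp⟩

lemma permGame_unanimity {g : Equiv.Perm Ω} {R : Finset Ω} (hR : R.Nonempty)
    (hgR : R.image g = R) : permGame g (unanimity R hR) = unanimity R hR := by
  apply Subtype.ext
  funext S
  show (unanimity R hR : Finset Ω → ℝ) (S.image (g⁻¹ : Equiv.Perm Ω)) = _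
  rw [unanimity_coe, unanimity_coe]
  congr 1
  simp only [eq_iff_iff]
  rw [← Finset.image_subset_image_iff g.injective, image_inv_eq, hgR]

lemma key_unanimity (G : Subgroup (Equiv.Perm Ω)) (hG : Supertransitive G)
    (φ : GameValue Ω) (hq : IsQuasiValue φ) (hs : IsGSym G φ)
    (R : Finset Ω) (hR : R.Nonempty) (i : Ω) :
    φ (unanimity R hR) i = if i ∈ R then 1 / (R.card : ℝ) else 0 := by
  have hzero : ∀ j : Ω, j ∉ R → φ (unanimity R hR) j = 0 := by
    intro j hj
    apply hq.1
    intro S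
    simp [unanimity_coe, Finset.subset_insert_iff_of_notMem hj]
  have hconst : ∀ i ∈ R, ∀ j ∈ R, φ (unanimity R hR) i = φ (unanimity R hR) j := by
    intro i hi j hj
    obtain ⟨g, hgG, hgR, hgi⟩ := hG R i hi j hj
    have := hs g hgG (unanimity R hR) j
    rw [permGame_unanimity hR hgR] at this
    have hgj : (g⁻¹ : Equiv.Perm Ω) j = i := by rw [← hgi]; simp
    rw [hgj] at this
    exact this.symm
  by_cases hi : i ∈ R
  · have heff := hq.2 (unanimity R hR)
    rw [unanimity_coe] at heff
    simp only [Finset.subset_univ, if_true] at heff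
    have hsum : ∑ j, φ (unanimity R hR) j = R.card * φ (unanimity R hR) i := by
      rw [← Finset.sum_subset (Finset.subset_univ R) (fun j _ hj => hzero j hj)]
      rw [Finset.sum_congr rfl (fun j hj => hconst j hj i hi)]
      simp [mul_comm]
    rw [hsum] at heff
    have hcard : (R.card : ℝ) ≠ 0 := by
      simp [Finset.card_ne_zero_of_mem hi]
    rw [if_pos hi]
    field_simp
    linarith [heff]
  · rw [if_neg hi]; exact hzero i hi

end Aux
section Aux2
set_option linter.unusedSectionVars false
variable {Ω : Type*} [Fintype Ω] [DecidableEq Ω]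

lemma shapley_apply (v : GameSpace Ω) (i : Ω) :
    shapley Ω v i = ∑ R ∈ (Finset.univ.erase i).powerset,
      ((R.card.factorial * (Fintype.card Ω - R.card - 1).factorial : ℝ) /
        (Fintype.card Ω).factorial) *
        ((v : Finset Ω → ℝ) (insert i R) - (v : Finset Ω → ℝ) R) := rfl

lemma permGame_coe (g : Equiv.Perm Ω) (v : GameSpace Ω) (X : Finset Ω) :
    (permGame g v : Finset Ω → ℝ) X = (v : Finset Ω → ℝ) (X.image (g⁻¹ : Equiv.Perm Ω)) := rfl

lemma shapley_null (v : GameSpace Ω) (i : Ω) (h : IsNullPlayer i v) :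
    shapley Ω v i = 0 := by
  rw [shapley_apply]
  exact Finset.sum_eq_zero fun R _ => by rw [h R]; ring

lemma top_supertransitive : Supertransitive (⊤ : Subgroup (Equiv.Perm Ω)) := by
  intro A i hi j hj
  refine ⟨Equiv.swap i j, trivial, ?_, Equiv.swap_apply_left i j⟩
  have hsub : A.image (Equiv.swap i j) ⊆ A := by
    intro x hx
    simp only [Finset.mem_image] at hx
    obtain ⟨y, hy, rfl⟩ := hx
    by_cases h1 : y = i
    · subst h1; rw [Equiv.swap_apply_left]; exact hj
    by_cases h2 : y = j
    · subst h2; rw [Equiv.swap_apply_right]; exact hi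
    · rw [Equiv.swap_apply_of_ne_of_ne h1 h2]; exact hy
  exact Finset.eq_of_subset_of_card_le hsub
    (by rw [Finset.card_image_of_injective _ (Equiv.injective _)])

lemma shapley_sym (g : Equiv.Perm Ω) (v : GameSpace Ω) (i : Ω) :
    shapley Ω (permGame g v) i = shapley Ω v (g⁻¹ i) := by
  rw [shapley_apply, shapley_apply]
  refine Finset.sum_bij' (fun S _ => S.image (g⁻¹ : Equiv.Perm Ω))
    (fun T _ => T.image (g : Equiv.Perm Ω)) ?_ ?_ ?_ ?_ ?_
  · intro S hS
    simp only [Finset.mem_powerset] at hS ⊢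
    intro x hx
    simp only [Finset.mem_image] at hx
    obtain ⟨y, hy, rfl⟩ := hx
    have hyi : y ≠ i := (Finset.mem_erase.mp (hS hy)).1
    exact Finset.mem_erase.mpr ⟨fun h => hyi ((g⁻¹ : Equiv.Perm Ω).injective h), Finset.mem_univ _⟩
  · intro T hT
    simp only [Finset.mem_powerset] at hT ⊢
    intro x hx
    simp only [Finset.mem_image] at hx
    obtain ⟨y, hy, rfl⟩ := hx
    have hyi : y ≠ g⁻¹ i := (Finset.mem_erase.mp (hT hy)).1
    refine Finset.mem_erase.mpr ⟨fun h => hyi ?_, Finset.mem_univ _⟩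
    rw [← h]; simp
  · intro S _; exact image_inv_eq
  · intro T _
    rw [Finset.image_image]
    ext x
    simp only [Finset.mem_image, Function.comp_apply]
    constructor
    · rintro ⟨y, hy, rfl⟩; simpa using hy
    · intro hx; exact ⟨x, hx, by simp⟩
  · intro S _
    rw [Finset.card_image_of_injective _ (Equiv.injective _)]
    rw [permGame_coe, permGame_coe, Finset.image_insert]

end Aux2
section Aux3
set_option linter.unusedSectionVars false
variable {Ω : Type*} [Fintype Ω] [DecidableEq Ω]

noncomputable def shw (n s : ℕ) : ℝ :=
  (s.factorial * (n - s - 1).factorial : ℝ) / n.factorial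

lemma shapley_apply' (v : GameSpace Ω) (i : Ω) :
    shapley Ω v i = ∑ R ∈ (Finset.univ.erase i).powerset,
      shw (Fintype.card Ω) R.card *
        ((v : Finset Ω → ℝ) (insert i R) - (v : Finset Ω → ℝ) R) := rfl

lemma shw_step {n t : ℕ} (ht : 1 ≤ t) (htn : t < n) :
    (t : ℝ) * shw n (t - 1) = ((n : ℝ) - t) * shw n t := by
  unfold shw
  have h1 : n - (t - 1) - 1 = n - t := by omega
  rw [h1]
  have h2 : (t : ℝ) * (t - 1).factorial = t.factorial := by
    exact_mod_cast Nat.mul_factorial_pred (by omega)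
  have hc : ((n : ℝ) - t) = ((n - t : ℕ) : ℝ) := by
    rw [Nat.cast_sub htn.le]
  have h3 : ((n - t : ℕ) : ℝ) * (n - t - 1).factorial = (n - t).factorial := by
    exact_mod_cast Nat.mul_factorial_pred (by omega)
  rw [← mul_div_assoc, ← mul_div_assoc]
  congr 1
  calc (t : ℝ) * ((t - 1).factorial * (n - t).factorial)
      = ((t : ℝ) * (t - 1).factorial) * (n - t).factorial := by ring
    _ = (t.factorial : ℝ) * (n - t).factorial := by rw [h2]
    _ = (t.factorial : ℝ) * (((n - t : ℕ) : ℝ) * (n - t - 1).factorial) := by rw [h3]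
    _ = ((n : ℝ) - t) * (t.factorial * (n - t - 1).factorial) := by rw [hc]; ring

lemma shw_top {n : ℕ} (hn : 0 < n) : (n : ℝ) * shw n (n - 1) = 1 := by
  unfold shw
  have h1 : n - (n - 1) - 1 = 0 := by omega
  have h2 : (n : ℝ) * (n - 1).factorial = n.factorial := by
    exact_mod_cast Nat.mul_factorial_pred hn.ne'
  rw [h1, Nat.factorial_zero, Nat.cast_one, mul_one, ← mul_div_assoc, h2,
    div_self (by exact_mod_cast n.factorial_ne_zero)]

lemma shapley_efficient (v : GameSpace Ω) :
    ∑ i, shapley Ω v i = (v : Finset Ω → ℝ) Finset.univ := by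
  classical
  set V : Finset Ω → ℝ := (v : Finset Ω → ℝ) with hV
  set n := Fintype.card Ω with hn
  rcases Nat.eq_zero_or_pos n with h0 | hpos
  · haveI : IsEmpty Ω := Fintype.card_eq_zero_iff.mp h0
    rw [show (Finset.univ : Finset Ω) = ∅ from Finset.univ_eq_empty]
    rw [Finset.sum_empty]
    exact (v.2).symm
  have hA : ∀ i : Ω, ∑ S ∈ (Finset.univ.erase i).powerset, shw n S.card * V (insert i S)
      = ∑ T ∈ Finset.univ.powerset.filter (fun T => i ∈ T),
          shw n (T.card - 1) * V T := by
    intro i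
    refine Finset.sum_bij' (fun S _ => insert i S) (fun T _ => T.erase i) ?_ ?_ ?_ ?_ ?_
    · intro S hS
      simp only [Finset.mem_powerset] at hS
      simp [Finset.mem_filter]
    · intro T hT
      simp only [Finset.mem_filter, Finset.mem_powerset] at hT
      simp only [Finset.mem_powerset]
      exact Finset.erase_subset_erase i hT.1
    · intro S hS
      simp only [Finset.mem_powerset] at hS
      have hiS : i ∉ S := fun h => (Finset.mem_erase.mp (hS h)).1 rfl
      simp [Finset.erase_insert hiS]
    · intro T hT
      exact Finset.insert_erase (Finset.mem_filter.mp hT).2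
    · intro S hS
      simp only [Finset.mem_powerset] at hS
      have hiS : i ∉ S := fun h => (Finset.mem_erase.mp (hS h)).1 rfl
      rw [Finset.card_insert_of_notMem hiS]
      simp
  have hBset : ∀ i : Ω, (Finset.univ.erase i).powerset
      = Finset.univ.powerset.filter (fun T => i ∉ T) := by
    intro i
    ext S
    simp [Finset.subset_erase]
  have e1 : ∑ i, shapley Ω v i =
      (∑ i : Ω, ∑ S ∈ (Finset.univ.erase i).powerset, shw n S.card * V (insert i S)) -
      (∑ i : Ω, ∑ S ∈ (Finset.univ.erase i).powerset, shw n S.card * V S) := by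
    rw [← Finset.sum_sub_distrib]
    refine Finset.sum_congr rfl fun i _ => ?_
    rw [shapley_apply', ← hn, ← Finset.sum_sub_distrib]
    exact Finset.sum_congr rfl fun S _ => by rw [← hV]; ring
  have e2 : ∑ i : Ω, ∑ S ∈ (Finset.univ.erase i).powerset, shw n S.card * V (insert i S)
      = ∑ T ∈ Finset.univ.powerset, (T.card : ℝ) * (shw n (T.card - 1) * V T) := by
    rw [Finset.sum_congr rfl (fun i _ => hA i)]
    rw [Finset.sum_comm' (s' := fun T => T) (t' := Finset.univ.powerset)
      (fun i T => by simp)]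
    refine Finset.sum_congr rfl fun T _ => ?_
    rw [Finset.sum_const, nsmul_eq_mul]
  have e3 : ∑ i : Ω, ∑ S ∈ (Finset.univ.erase i).powerset, shw n S.card * V S
      = ∑ T ∈ Finset.univ.powerset, ((n : ℝ) - T.card) * (shw n T.card * V T) := by
    rw [Finset.sum_congr rfl (fun i _ => by rw [hBset i])]
    rw [Finset.sum_comm' (s' := fun T => Finset.univ \ T) (t' := Finset.univ.powerset)
      (fun i T => by simp)]
    refine Finset.sum_congr rfl fun T _ => ?_
    rw [Finset.sum_const, nsmul_eq_mul, Finset.card_sdiff_of_subset (Finset.subset_univ T),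
      Finset.card_univ, ← hn, Nat.cast_sub (by rw [hn, ← Finset.card_univ]; exact Finset.card_le_card (Finset.subset_univ T))]
  rw [e1, e2, e3, ← Finset.sum_sub_distrib]
  rw [Finset.sum_eq_single_of_mem Finset.univ (Finset.mem_powerset.mpr (subset_refl _))
    ?rest]
  case rest =>
    intro T hT hTne
    rcases T.eq_empty_or_nonempty with rfl | hTne2
    · have hV0 : V ∅ = 0 := v.2
      rw [hV0]; ring
    · have h1 : 1 ≤ T.card := Finset.card_pos.mpr hTne2
      have h2 : T.card < n := by
        have := Finset.card_lt_card (Finset.ssubset_univ_iff.mpr hTne)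
        rw [Finset.card_univ, ← hn] at this
        exact this
      have hst := shw_step h1 h2
      calc (T.card : ℝ) * (shw n (T.card - 1) * V T)
            - ((n : ℝ) - T.card) * (shw n T.card * V T)
          = ((T.card : ℝ) * shw n (T.card - 1) - ((n : ℝ) - T.card) * shw n T.card) * V T := by
            ring
        _ = 0 := by rw [hst]; ring
  rw [Finset.card_univ, ← hn]
  have ht := shw_top hpos
  calc (n : ℝ) * (shw n (n - 1) * V Finset.univ)
        - ((n : ℝ) - n) * (shw n n * V Finset.univ)
      = ((n : ℝ) * shw n (n - 1)) * V Finset.univ := by ring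
    _ = V Finset.univ := by rw [ht]; ring

end Aux3
section Aux4
set_option linter.unusedSectionVars false
variable {Ω : Type*} [Fintype Ω] [DecidableEq Ω]

noncomputable def mobC (v : GameSpace Ω) (R : Finset Ω) : ℝ :=
  ∑ S ∈ R.powerset, (-1 : ℝ) ^ (R.card - S.card) * (v : Finset Ω → ℝ) S

lemma mobC_empty (v : GameSpace Ω) : mobC v ∅ = 0 := by
  have h0 : (v : Finset Ω → ℝ) ∅ = 0 := v.2
  simp [mobC, h0]

lemma sum_pow_neg_one {α : Type*} [DecidableEq α] (s : Finset α) :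
    ∑ U ∈ s.powerset, (-1 : ℝ) ^ U.card = if s = ∅ then 1 else 0 := by
  have h := Finset.sum_powerset_neg_one_pow_card (x := s)
  calc ∑ U ∈ s.powerset, (-1 : ℝ) ^ U.card
      = ((∑ U ∈ s.powerset, (-1 : ℤ) ^ U.card : ℤ) : ℝ) := by push_cast; rfl
    _ = _ := by rw [h]; split_ifs <;> simp

lemma mobius_inv (v : GameSpace Ω) (T : Finset Ω) :
    ∑ R ∈ T.powerset, mobC v R = (v : Finset Ω → ℝ) T := by
  unfold mobC
  rw [Finset.sum_comm' (s' := fun S => T.powerset.filter (fun R => S ⊆ R))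
    (t' := T.powerset) (fun R S => by
      simp only [Finset.mem_powerset, Finset.mem_filter]
      constructor
      · rintro ⟨h1, h2⟩; exact ⟨⟨h1, h2⟩, h2.trans h1⟩
      · rintro ⟨⟨h1, h2⟩, _⟩; exact ⟨h1, h2⟩)]
  have inner : ∀ S ∈ T.powerset,
      ∑ R ∈ T.powerset.filter (fun R => S ⊆ R),
        (-1 : ℝ) ^ (R.card - S.card) * (v : Finset Ω → ℝ) S
      = (if S = T then 1 else 0) * (v : Finset Ω → ℝ) S := by
    intro S hS
    rw [Finset.mem_powerset] at hS
    rw [← Finset.sum_mul]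
    congr 1
    have reix : ∑ R ∈ T.powerset.filter (fun R => S ⊆ R), (-1 : ℝ) ^ (R.card - S.card)
        = ∑ U ∈ (T \ S).powerset, (-1 : ℝ) ^ U.card := by
      refine Finset.sum_bij' (fun R _ => R \ S) (fun U _ => S ∪ U) ?_ ?_ ?_ ?_ ?_
      · intro R hR
        simp only [Finset.mem_filter, Finset.mem_powerset] at hR ⊢
        exact Finset.sdiff_subset_sdiff hR.1 (subset_refl S)
      · intro U hU
        simp only [Finset.mem_powerset] at hU
        simp only [Finset.mem_filter, Finset.mem_powerset]
        exact ⟨Finset.union_subset hS (hU.trans (Finset.sdiff_subset)), Finset.subset_union_left⟩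
      · intro R hR
        simp only [Finset.mem_filter] at hR
        exact Finset.union_sdiff_of_subset hR.2
      · intro U hU
        simp only [Finset.mem_powerset] at hU
        have hdisj : Disjoint S U :=
          (Finset.disjoint_of_subset_right hU Finset.sdiff_disjoint.symm)
        exact Finset.union_sdiff_cancel_left hdisj
      · intro R hR
        simp only [Finset.mem_filter] at hR
        rw [Finset.card_sdiff_of_subset hR.2]
    rw [reix, sum_pow_neg_one]
    congr 1
    simp only [eq_iff_iff, Finset.sdiff_eq_empty_iff_subset]
    constructor
    · intro h; exact Finset.Subset.antisymm hS h
    · intro h; rw [h]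
  rw [Finset.sum_congr rfl inner]
  rw [Finset.sum_eq_single_of_mem T (Finset.mem_powerset_self T)
    (fun S _ hSne => by rw [if_neg hSne, zero_mul])]
  rw [if_pos rfl, one_mul]

lemma unanimity_span :
    Submodule.span ℝ {u : GameSpace Ω | ∃ R hR, u = unanimity R hR} = ⊤ := by
  rw [Submodule.eq_top_iff']
  intro v
  set 𝒩 := (Finset.univ : Finset Ω).powerset.erase ∅ with h𝒩
  have hne : ∀ R ∈ 𝒩, R.Nonempty := fun R hR =>
    Finset.nonempty_iff_ne_empty.mpr (Finset.mem_erase.mp hR).1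
  have hv : v = ∑ R ∈ 𝒩.attach, mobC v R.1 • unanimity R.1 (hne R.1 R.2) := by
    apply Subtype.ext
    rw [AddSubmonoidClass.coe_finset_sum]
    funext T
    rw [Finset.sum_apply]
    have : ∀ R ∈ 𝒩.attach,
        (↑(mobC v R.1 • unanimity R.1 (hne R.1 R.2)) : Finset Ω → ℝ) T
        = mobC v R.1 * (if R.1 ⊆ T then 1 else 0) := by
      intro R _
      rw [SetLike.val_smul, Pi.smul_apply, smul_eq_mul, unanimity_coe]
    rw [Finset.sum_congr rfl this]
    rw [Finset.sum_attach 𝒩 (fun R => mobC v R * (if R ⊆ T then 1 else 0))]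
    have hfull : ∑ R ∈ 𝒩, mobC v R * (if R ⊆ T then 1 else 0)
        = ∑ R ∈ (Finset.univ : Finset Ω).powerset, mobC v R * (if R ⊆ T then 1 else 0) := by
      rw [← Finset.sum_erase_add _ _ (Finset.mem_powerset.mpr (Finset.empty_subset _))]
      rw [← h𝒩, mobC_empty, zero_mul, add_zero]
    rw [hfull]
    have hsplit : ∑ R ∈ (Finset.univ : Finset Ω).powerset, mobC v R * (if R ⊆ T then 1 else 0)
        = ∑ R ∈ T.powerset, mobC v R := by
      have : ∀ R ∈ (Finset.univ : Finset Ω).powerset,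
          mobC v R * (if R ⊆ T then 1 else 0) = if R ⊆ T then mobC v R else 0 := by
        intro R _
        split <;> ring
      rw [Finset.sum_congr rfl this, ← Finset.sum_filter]
      congr 1
      ext R
      simp
    rw [hsplit, mobius_inv]
  rw [hv]
  exact Submodule.sum_mem _ (fun R _ => Submodule.smul_mem _ _
    (Submodule.subset_span ⟨R.1, hne R.1 R.2, rfl⟩))

end Aux4

/-- if `G` acts supertransitively, then every `G`-symmetric
quasi-value `φ` satisfies `φᵢ(u_R) = 1/|R|` for `i ∈ R` and `0` otherwise, on
every unanimity game; hence `φ` is the Shapley value. -/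
theorem stmt7 {Ω : Type*} [Fintype Ω] [DecidableEq Ω] (G : Subgroup (Equiv.Perm Ω))
    (hG : Supertransitive G) (φ : GameValue Ω) (hq : IsQuasiValue φ)
    (hs : IsGSym G φ) :
    (∀ (R : Finset Ω) (hR : R.Nonempty) (i : Ω),
        φ (unanimity R hR) i = if i ∈ R then 1 / (R.card : ℝ) else 0) ∧
    φ = shapley Ω := by
  have hqs : IsQuasiValue (shapley Ω) :=
    ⟨fun v i h => shapley_null v i h, shapley_efficient⟩
  have hss : IsGSym ⊤ (shapley Ω) := fun g _ v i => shapley_sym g v i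
  refine ⟨key_unanimity G hG φ hq hs, ?_⟩
  apply LinearMap.ext_on unanimity_span
  rintro u ⟨R, hR, rfl⟩
  funext i
  rw [key_unanimity G hG φ hq hs R hR i,
    key_unanimity ⊤ top_supertransitive (shapley Ω) hqs hss R hR i]
end
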